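/- arXiv:1905.07498 — 6 statements merged into one kernel-verified Lean document; each statement's English description precedes it below -/
import Mathlib

section
/- (Theorem 2, Lipschitz case.) Let K : ℝ → ℝ be a smoothing kernel with bound M, let ν > 0, and set h_ν(x) = (1/ν)·K(x/ν). Assume h_ν is Lipschitz continuous on ℝ. Then the function F : (0,∞) → ℝ defined by F(σ) = sup_{x ∈ ℝ} V_ν(x,σ) attains a global maximum on (0,∞); i.e., there exists σ* ∈ (0,∞) such that F(σ) ≤ F(σ*) for all σ ∈ (0,∞). -/
open MeasureTheory ProbabilityTheory Real Filter

/-- The short-exposure PSF `h_ν(x) = (1/ν) K(x/ν)`. -/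
noncomputable def shortPSF (K : ℝ → ℝ) (ν : ℝ) (x : ℝ) : ℝ := (1 / ν) * K (x / ν)

/-- `V_ν(x,σ) = Var[h_ν(x-Θ)] = E[h_ν(x-Θ)²] − (E[h_ν(x-Θ)])²` where `Θ ~ N(0,σ²)`. -/
noncomputable def Vnu (K : ℝ → ℝ) (ν σ x : ℝ) : ℝ :=
  (∫ θ, (shortPSF K ν (x - θ)) ^ 2 ∂(gaussianReal 0 (σ ^ 2).toNNReal))
    - (∫ θ, shortPSF K ν (x - θ) ∂(gaussianReal 0 (σ ^ 2).toNNReal)) ^ 2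

open scoped ENNReal NNReal

noncomputable def gm (σ : ℝ) : Measure ℝ := gaussianReal 0 (σ^2).toNNReal
noncomputable def gphi (σ θ : ℝ) : ℝ := gaussianPDFReal 0 (σ^2).toNNReal θ

lemma var_ne_zero {σ : ℝ} (hσ : 0 < σ) : ((σ:ℝ)^2).toNNReal ≠ 0 := by
  simp [Real.toNNReal_eq_zero, not_le]; positivity

lemma gphi_nonneg (σ θ : ℝ) : 0 ≤ gphi σ θ := gaussianPDFReal_nonneg _ _ _

lemma gphi_integrable (σ : ℝ) : Integrable (gphi σ) := integrable_gaussianPDFReal _ _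

lemma gphi_meas (σ : ℝ) : Measurable (gphi σ) := measurable_gaussianPDFReal _ _

/-- transfer integral over gaussian to Lebesgue integral against the density -/
lemma integral_gm {σ : ℝ} (hσ : 0 < σ) (g : ℝ → ℝ) :
    ∫ θ, g θ ∂(gm σ) = ∫ θ, g θ * gphi σ θ := by
  rw [gm, gaussianReal_of_var_ne_zero 0 (var_ne_zero hσ)]
  have h1 : (gaussianPDF 0 ((σ:ℝ)^2).toNNReal) =
      fun θ => ((gphi σ θ).toNNReal : ℝ≥0∞) := by
    funext θ; rfl
  rw [h1, integral_withDensity_eq_integral_smul ((gphi_meas σ).real_toNNReal)]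
  congr 1; funext θ
  rw [NNReal.smul_def, smul_eq_mul, Real.coe_toNNReal _ (gphi_nonneg σ θ), mul_comm]

lemma gphi_eq {σ : ℝ} (hσ : 0 < σ) (θ : ℝ) :
    gphi σ θ = (Real.sqrt (2 * π * σ^2))⁻¹ * Real.exp (-θ^2 / (2 * σ^2)) := by
  rw [gphi, gaussianPDFReal]
  rw [Real.coe_toNNReal _ (sq_nonneg σ)]
  simp

lemma gphi_le {σ : ℝ} (hσ : 0 < σ) (θ : ℝ) :
    gphi σ θ ≤ (Real.sqrt (2 * π * σ^2))⁻¹ := by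
  rw [gphi_eq hσ]
  have h1 : Real.exp (-θ^2 / (2 * σ^2)) ≤ 1 := by
    rw [Real.exp_le_one_iff]
    apply div_nonpos_of_nonpos_of_nonneg <;> [simp [sq_nonneg]; positivity]
  calc _ ≤ (Real.sqrt (2 * π * σ^2))⁻¹ * 1 := by
        apply mul_le_mul_of_nonneg_left h1 (by positivity)
    _ = _ := mul_one _

noncomputable def Dtv (σ σ' : ℝ) : ℝ := ∫ θ, |gphi σ θ - gphi σ' θ|

lemma Dtv_nonneg (σ σ' : ℝ) : 0 ≤ Dtv σ σ' :=
  integral_nonneg fun θ => abs_nonneg _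

instance gm_prob (σ : ℝ) : IsProbabilityMeasure (gm σ) := by
  rw [gm]; infer_instance

/-- integrability of g·φ over volume for bounded measurable g -/
lemma integrable_mul_gphi {g : ℝ → ℝ} {B : ℝ} (hgm : AEStronglyMeasurable g volume)
    (hg0 : ∀ y, 0 ≤ g y) (hgB : ∀ y, g y ≤ B) (σ : ℝ) :
    Integrable (fun θ => g θ * gphi σ θ) := by
  apply Integrable.mono' ((gphi_integrable σ).const_mul B)
    (hgm.mul (gphi_meas σ).aestronglyMeasurable)
  filter_upwards with θ
  simp only [Pi.mul_apply, Real.norm_eq_abs, abs_mul, abs_of_nonneg (hg0 θ),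
    abs_of_nonneg (gphi_nonneg σ θ)]
  exact mul_le_mul_of_nonneg_right (hgB θ) (gphi_nonneg σ θ)

/-- key TV bound: difference of gaussian integrals of a bounded function -/
lemma integral_gm_diff_le {g : ℝ → ℝ} {B : ℝ} (hgm : AEStronglyMeasurable g volume)
    (hg0 : ∀ y, 0 ≤ g y) (hgB : ∀ y, g y ≤ B) {σ σ' : ℝ} (hσ : 0 < σ) (hσ' : 0 < σ') :
    |(∫ θ, g θ ∂(gm σ)) - ∫ θ, g θ ∂(gm σ')| ≤ B * Dtv σ σ' := by
  rw [integral_gm hσ, integral_gm hσ', ← integral_sub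
    (integrable_mul_gphi hgm hg0 hgB σ) (integrable_mul_gphi hgm hg0 hgB σ')]
  calc |∫ θ, (g θ * gphi σ θ - g θ * gphi σ' θ)|
      ≤ ∫ θ, |g θ * gphi σ θ - g θ * gphi σ' θ| := by
        simpa [Real.norm_eq_abs] using norm_integral_le_integral_norm
          (fun θ => g θ * gphi σ θ - g θ * gphi σ' θ) (μ := volume)
    _ ≤ ∫ θ, B * |gphi σ θ - gphi σ' θ| := by
        apply integral_mono
          ((integrable_mul_gphi hgm hg0 hgB σ).sub (integrable_mul_gphi hgm hg0 hgB σ')).abs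
          (((gphi_integrable σ).sub (gphi_integrable σ')).abs.const_mul B)
        intro θ
        simp only [Pi.sub_apply]
        rw [← mul_sub, abs_mul]
        apply mul_le_mul_of_nonneg_right _ (abs_nonneg _)
        rw [abs_of_nonneg (hg0 θ)]; exact hgB θ
    _ = B * Dtv σ σ' := by rw [Dtv, integral_const_mul]

/-- bounded measurable functions are integrable wrt gm and integral bounded -/
lemma aesm_gm {g : ℝ → ℝ} (hgm : AEStronglyMeasurable g volume) {σ : ℝ} (hσ : 0 < σ) :
    AEStronglyMeasurable g (gm σ) :=
  hgm.mono_ac (by rw [gm]; exact gaussianReal_absolutelyContinuous 0 (var_ne_zero hσ))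

lemma integrable_gm {g : ℝ → ℝ} {B : ℝ} (hgm : AEStronglyMeasurable g volume)
    (hgB : ∀ y, |g y| ≤ B) {σ : ℝ} (hσ : 0 < σ) : Integrable g (gm σ) := by
  apply Integrable.mono' (integrable_const B) (aesm_gm hgm hσ)
  filter_upwards with θ using hgB θ

lemma integral_gm_le {g : ℝ → ℝ} {B : ℝ} (hgm : AEStronglyMeasurable g volume)
    (hgB : ∀ y, |g y| ≤ B) {σ : ℝ} (hσ : 0 < σ) : ∫ θ, g θ ∂(gm σ) ≤ B := by
  calc ∫ θ, g θ ∂(gm σ) ≤ ∫ _θ, B ∂(gm σ) := by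
        apply integral_mono (integrable_gm hgm hgB hσ) (integrable_const B)
        intro θ; exact (abs_le.mp (hgB θ)).2
    _ = B := by simp

lemma gphi_bound {σ₀ : ℝ} (hσ₀ : 0 < σ₀) {σ : ℝ} (hσ : σ ∈ Set.Ioo (σ₀/2) (2*σ₀)) (θ : ℝ) :
    gphi σ θ ≤ (Real.sqrt (2 * π * (σ₀/2)^2))⁻¹ *
      Real.exp (-(1/(2 * (2*σ₀)^2)) * θ^2) := by
  obtain ⟨h1, h2⟩ := hσ
  have hσpos : 0 < σ := lt_trans (by positivity) h1
  rw [gphi_eq hσpos]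
  apply mul_le_mul
  · apply inv_anti₀ (by positivity)
    apply Real.sqrt_le_sqrt
    have : (σ₀/2)^2 ≤ σ^2 := by nlinarith
    nlinarith [Real.pi_pos]
  · rw [Real.exp_le_exp]
    have hd : θ^2 / (2*(2*σ₀)^2) ≤ θ^2/(2*σ^2) :=
      div_le_div_of_nonneg_left (sq_nonneg θ) (by positivity) (by nlinarith)
    calc -θ^2/(2*σ^2) = -(θ^2/(2*σ^2)) := by ring
      _ ≤ -(θ^2/(2*(2*σ₀)^2)) := by linarith
      _ = -(1/(2*(2*σ₀)^2))*θ^2 := by ring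
  · positivity
  · positivity

lemma gphi_contAt {σ₀ : ℝ} (hσ₀ : 0 < σ₀) (θ : ℝ) :
    Tendsto (fun σ => gphi σ θ) (nhdsWithin σ₀ (Set.Ioi 0)) (nhds (gphi σ₀ θ)) := by
  have key : Tendsto (fun σ : ℝ => (Real.sqrt (2 * π * σ^2))⁻¹ *
      Real.exp (-θ^2 / (2 * σ^2))) (nhds σ₀)
      (nhds ((Real.sqrt (2 * π * σ₀^2))⁻¹ * Real.exp (-θ^2 / (2 * σ₀^2)))) := by
    apply Tendsto.mul
    · apply Tendsto.inv₀
      · exact ((Real.continuous_sqrt.comp (by continuity)).tendsto σ₀)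
      · positivity
    · exact (Real.continuous_exp.tendsto _).comp
        (tendsto_const_nhds.div ((continuous_const.mul (continuous_pow 2)).tendsto σ₀)
          (by positivity))
  rw [gphi_eq hσ₀]
  apply Tendsto.congr' _ (key.mono_left nhdsWithin_le_nhds)
  filter_upwards [self_mem_nhdsWithin] with σ hσ
  exact (gphi_eq hσ θ).symm

lemma Dtv_tendsto {σ₀ : ℝ} (hσ₀ : 0 < σ₀) :
    Tendsto (fun σ => Dtv σ σ₀) (nhdsWithin σ₀ (Set.Ioi 0)) (nhds 0) := by
  have hev : ∀ᶠ σ in nhdsWithin σ₀ (Set.Ioi 0), σ ∈ Set.Ioo (σ₀/2) (2*σ₀) :=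
    eventually_nhdsWithin_of_eventually_nhds
      (eventually_of_mem (Ioo_mem_nhds (by linarith) (by linarith)) (fun σ hσ => hσ))
  have key : Tendsto (fun σ => Dtv σ σ₀) (nhdsWithin σ₀ (Set.Ioi 0))
      (nhds (∫ _θ : ℝ, (0:ℝ))) := ?_
  · simpa using key
  apply tendsto_integral_filter_of_dominated_convergence
    (fun θ => 2 * ((Real.sqrt (2 * π * (σ₀/2)^2))⁻¹ *
      Real.exp (-(1/(2 * (2*σ₀)^2)) * θ^2)))
  · filter_upwards with σ
    exact ((gphi_meas σ).sub (gphi_meas σ₀)).abs.aestronglyMeasurable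
  · filter_upwards [hev] with σ hσ
    filter_upwards with θ
    have b1 := gphi_bound hσ₀ hσ θ
    have b2 := gphi_bound hσ₀ (by constructor <;> linarith [hσ.1, hσ.2, hσ₀] : σ₀ ∈ Set.Ioo (σ₀/2) (2*σ₀)) θ
    have := gphi_nonneg σ θ; have := gphi_nonneg σ₀ θ
    rw [Real.norm_eq_abs, abs_abs]
    calc |gphi σ θ - gphi σ₀ θ| ≤ gphi σ θ + gphi σ₀ θ := by
          rw [abs_sub_le_iff]; constructor <;> linarith
      _ ≤ _ := by linarith
  · apply Integrable.const_mul
    apply Integrable.const_mul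
    exact integrable_exp_neg_mul_sq (by positivity)
  · filter_upwards with θ
    have := (gphi_contAt hσ₀ θ).sub (tendsto_const_nhds (x := gphi σ₀ θ))
    rw [sub_self] at this
    simpa using this.abs

noncomputable def msq : ℝ := ∫ θ, θ^2 ∂(gaussianReal 0 1)

lemma msq_nonneg : 0 ≤ msq := integral_nonneg fun θ => sq_nonneg θ

lemma integrable_sq_exp {b : ℝ} (hb : 0 < b) :
    Integrable (fun x : ℝ => x^2 * Real.exp (-b*x^2)) := by
  have := integrable_rpow_mul_exp_neg_mul_sq hb (s := 2) (by norm_num)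
  simpa [Real.rpow_two] using this

lemma integrable_sq_gm {σ : ℝ} (hσ : 0 < σ) :
    Integrable (fun θ : ℝ => θ^2) (gm σ) := by
  rw [gm, gaussianReal_of_var_ne_zero 0 (var_ne_zero hσ),
    integrable_withDensity_iff (measurable_gaussianPDF _ _)
      (Filter.Eventually.of_forall fun x => ENNReal.ofReal_lt_top)]
  have heq : ∀ θ : ℝ, (gaussianPDF 0 ((σ:ℝ)^2).toNNReal θ).toReal = gphi σ θ := fun θ =>
    ENNReal.toReal_ofReal (gphi_nonneg σ θ)
  apply Integrable.mono' (((integrable_sq_exp (b := 1/(2*σ^2)) (by positivity)).const_mul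
    ((Real.sqrt (2 * π * σ^2))⁻¹)))
  · exact ((measurable_id.pow_const 2).mul
      ((measurable_gaussianPDF _ _).ennreal_toReal)).aestronglyMeasurable
  · filter_upwards with θ
    rw [Real.norm_eq_abs, abs_mul, heq θ, gphi_eq hσ, abs_of_nonneg (sq_nonneg θ),
      abs_of_nonneg (by positivity : (0:ℝ) ≤ (Real.sqrt (2 * π * σ^2))⁻¹ * Real.exp (-θ^2 / (2 * σ^2)))]
    have : -θ^2 / (2 * σ^2) = -(1/(2*σ^2))*θ^2 := by ring
    rw [this]; ring_nf; rfl

lemma gm_eq_map {σ : ℝ} (hσ : 0 < σ) :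
    gm σ = Measure.map (fun z => σ * z) (gaussianReal 0 1) := by
  rw [gaussianReal_map_const_mul σ]
  rw [gm]
  congr 1
  · ring
  · ext
    simp [Real.coe_toNNReal _ (sq_nonneg σ)]

lemma integral_sq_gm {σ : ℝ} (hσ : 0 < σ) :
    ∫ θ, θ^2 ∂(gm σ) = σ^2 * msq := by
  rw [gm_eq_map hσ, integral_map (measurable_const_mul σ).aemeasurable]
  · simp_rw [mul_pow]
    rw [integral_const_mul]
    rfl
  · exact ((measurable_id.pow_const 2).aestronglyMeasurable)

section Main

variable {K : ℝ → ℝ} {M ν : ℝ}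

lemma psf_nonneg (hν : 0 < ν) (hK0 : ∀ x, 0 ≤ K x) (y : ℝ) : 0 ≤ shortPSF K ν y := by
  have := hK0 (y/ν)
  rw [shortPSF]; positivity

lemma psf_le (hν : 0 < ν) (hKM : ∀ x, K x ≤ M) (y : ℝ) : shortPSF K ν y ≤ M / ν := by
  rw [shortPSF, div_eq_mul_inv M, one_div, mul_comm M]
  exact mul_le_mul_of_nonneg_left (hKM _) (by positivity)

lemma psf_int (hν : 0 < ν) (hKint : Integrable K) : Integrable (shortPSF K ν) := by
  have : Integrable (fun x => K (x / ν)) := hKint.comp_div hν.ne'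
  have h2 := this.const_mul (1/ν)
  have : shortPSF K ν = fun x => (1/ν) * K (x/ν) := rfl
  rw [this]; exact h2

lemma psf_sq_int (hν : 0 < ν) (hK0 : ∀ x, 0 ≤ K x) (hKM : ∀ x, K x ≤ M)
    (hKint : Integrable K) {L : NNReal} (hLip : LipschitzWith L (shortPSF K ν)) :
    Integrable (fun y => shortPSF K ν y ^ 2) := by
  apply Integrable.mono' ((psf_int hν hKint).const_mul (M/ν))
    ((hLip.continuous.pow 2).aestronglyMeasurable)
  filter_upwards with y
  rw [Real.norm_eq_abs, Pi.pow_apply, abs_of_nonneg (by positivity : (0:ℝ) ≤ shortPSF K ν y ^ 2), sq]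
  exact mul_le_mul_of_nonneg_right (psf_le hν hKM y) (psf_nonneg hν hK0 y)

lemma Vnu_eq (σ x : ℝ) : Vnu K ν σ x =
    (∫ θ, (shortPSF K ν (x - θ)) ^ 2 ∂(gm σ)) - (∫ θ, shortPSF K ν (x - θ) ∂(gm σ)) ^ 2 := rfl

lemma psf_shift_aesm {x : ℝ} {L : NNReal} (hLip : LipschitzWith L (shortPSF K ν)) (μ : Measure ℝ) :
    AEStronglyMeasurable (fun θ => shortPSF K ν (x - θ)) μ :=
  (hLip.continuous.comp (continuous_const.sub continuous_id)).aestronglyMeasurable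

lemma psf_shift_memℒp (hν : 0 < ν) (hK0 : ∀ x, 0 ≤ K x) (hKM : ∀ x, K x ≤ M)
    {L : NNReal} (hLip : LipschitzWith L (shortPSF K ν)) (σ x : ℝ) :
    MemLp (fun θ => shortPSF K ν (x - θ)) 2 (gm σ) := by
  apply MemLp.mono_exponent (q := ⊤) _ le_top
  apply memLp_top_of_bound (psf_shift_aesm hLip _) (M/ν)
  filter_upwards with θ
  rw [Real.norm_eq_abs, abs_of_nonneg (psf_nonneg hν hK0 _)]
  exact psf_le hν hKM _

lemma Vnu_eq_var (hν : 0 < ν) (hK0 : ∀ x, 0 ≤ K x) (hKM : ∀ x, K x ≤ M)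
    {L : NNReal} (hLip : LipschitzWith L (shortPSF K ν)) (σ x : ℝ) :
    Vnu K ν σ x = variance (fun θ => shortPSF K ν (x - θ)) (gm σ) := by
  rw [variance_eq_sub (psf_shift_memℒp hν hK0 hKM hLip σ x), Vnu_eq]
  congr 1

lemma Vnu_nonneg (hν : 0 < ν) (hK0 : ∀ x, 0 ≤ K x) (hKM : ∀ x, K x ≤ M)
    {L : NNReal} (hLip : LipschitzWith L (shortPSF K ν)) (σ x : ℝ) :
    0 ≤ Vnu K ν σ x := by
  rw [Vnu_eq_var hν hK0 hKM hLip]; exact variance_nonneg _ _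

lemma psf_shift_abs_le (hν : 0 < ν) (hK0 : ∀ x, 0 ≤ K x) (hKM : ∀ x, K x ≤ M) (x : ℝ) :
    ∀ θ : ℝ, |shortPSF K ν (x - θ)| ≤ M/ν := fun θ => by
  rw [abs_of_nonneg (psf_nonneg hν hK0 _)]; exact psf_le hν hKM _

lemma psf_shift_sq_abs_le (hν : 0 < ν) (hK0 : ∀ x, 0 ≤ K x) (hKM : ∀ x, K x ≤ M) (x : ℝ) :
    ∀ θ : ℝ, |shortPSF K ν (x - θ) ^ 2| ≤ (M/ν)^2 := fun θ => by
  rw [abs_of_nonneg (sq_nonneg _)]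
  apply sq_le_sq'
  · have := psf_nonneg hν hK0 (x - θ); have : (0:ℝ) ≤ M/ν := le_trans this (psf_le hν hKM _)
    linarith [psf_nonneg hν hK0 (x - θ)]
  · exact psf_le hν hKM _

lemma Vnu_le_sq (hν : 0 < ν) (hK0 : ∀ x, 0 ≤ K x) (hKM : ∀ x, K x ≤ M)
    {L : NNReal} (hLip : LipschitzWith L (shortPSF K ν)) {σ : ℝ} (hσ : 0 < σ) (x : ℝ) :
    Vnu K ν σ x ≤ (M/ν)^2 := by
  rw [Vnu_eq]
  have h2 : (∫ θ, shortPSF K ν (x - θ) ^ 2 ∂(gm σ)) ≤ (M/ν)^2 :=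
    integral_gm_le ((hLip.continuous.pow 2).comp
      (continuous_const.sub continuous_id)).aestronglyMeasurable
      (psf_shift_sq_abs_le hν hK0 hKM x) hσ
  nlinarith [sq_nonneg (∫ θ, shortPSF K ν (x - θ) ∂(gm σ))]

lemma Vnu_bddAbove (hν : 0 < ν) (hK0 : ∀ x, 0 ≤ K x) (hKM : ∀ x, K x ≤ M)
    {L : NNReal} (hLip : LipschitzWith L (shortPSF K ν)) {σ : ℝ} (hσ : 0 < σ) :
    BddAbove (Set.range fun x => Vnu K ν σ x) := by
  refine ⟨(M/ν)^2, ?_⟩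
  rintro _ ⟨x, rfl⟩
  exact Vnu_le_sq hν hK0 hKM hLip hσ x

lemma Vnu_diff_le (hν : 0 < ν) (hK0 : ∀ x, 0 ≤ K x) (hKM : ∀ x, K x ≤ M)
    {L : NNReal} (hLip : LipschitzWith L (shortPSF K ν)) {σ σ' : ℝ}
    (hσ : 0 < σ) (hσ' : 0 < σ') (x : ℝ) :
    Vnu K ν σ x ≤ Vnu K ν σ' x + 3 * (M/ν)^2 * Dtv σ σ' := by
  have hB : (0:ℝ) ≤ M/ν := le_trans (psf_nonneg hν hK0 0) (psf_le hν hKM 0)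
  have hgm : AEStronglyMeasurable (fun θ => shortPSF K ν (x - θ)) volume :=
    psf_shift_aesm hLip volume
  have hg2m : AEStronglyMeasurable (fun θ => shortPSF K ν (x - θ) ^ 2) volume :=
    ((hLip.continuous.pow 2).comp (continuous_const.sub continuous_id)).aestronglyMeasurable
  have d2 := integral_gm_diff_le hg2m (fun θ => sq_nonneg _)
    (fun θ => abs_le.mp (psf_shift_sq_abs_le hν hK0 hKM x θ) |>.2) hσ hσ'
  have d1 := integral_gm_diff_le hgm (fun θ => psf_nonneg hν hK0 _)
    (fun θ => psf_le hν hKM _) hσ hσ'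
  have hD : 0 ≤ Dtv σ σ' := Dtv_nonneg _ _
  have ha : 0 ≤ ∫ θ, shortPSF K ν (x - θ) ∂(gm σ) :=
    integral_nonneg fun θ => psf_nonneg hν hK0 _
  have ha' : ∫ θ, shortPSF K ν (x - θ) ∂(gm σ) ≤ M/ν :=
    integral_gm_le hgm (psf_shift_abs_le hν hK0 hKM x) hσ
  have hb : 0 ≤ ∫ θ, shortPSF K ν (x - θ) ∂(gm σ') :=
    integral_nonneg fun θ => psf_nonneg hν hK0 _
  have hb' : ∫ θ, shortPSF K ν (x - θ) ∂(gm σ') ≤ M/ν :=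
    integral_gm_le hgm (psf_shift_abs_le hν hK0 hKM x) hσ'
  rw [Vnu_eq, Vnu_eq]
  obtain ⟨d2a, d2b⟩ := abs_le.mp d2
  obtain ⟨d1a, d1b⟩ := abs_le.mp d1
  nlinarith [sq_nonneg (Dtv σ σ'), sq_nonneg (M/ν),
    mul_le_mul_of_nonneg_right d1b (add_nonneg ha hb),
    mul_le_mul_of_nonneg_left (add_le_add ha' hb') (mul_nonneg hB hD)]

lemma Vnu_le_msq (hν : 0 < ν) (hK0 : ∀ x, 0 ≤ K x) (hKM : ∀ x, K x ≤ M)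
    {L : NNReal} (hLip : LipschitzWith L (shortPSF K ν)) {σ : ℝ} (hσ : 0 < σ) (x : ℝ) :
    Vnu K ν σ x ≤ (L:ℝ)^2 * (σ^2 * msq) := by
  set c := shortPSF K ν x with hc
  have hB : (0:ℝ) ≤ M/ν := le_trans (psf_nonneg hν hK0 0) (psf_le hν hKM 0)
  have hgm : AEStronglyMeasurable (fun θ => shortPSF K ν (x - θ)) volume :=
    psf_shift_aesm hLip volume
  have hI1 : Integrable (fun θ => shortPSF K ν (x - θ)) (gm σ) :=
    integrable_gm hgm (psf_shift_abs_le hν hK0 hKM x) hσ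
  have hI2 : Integrable (fun θ => shortPSF K ν (x - θ) ^ 2) (gm σ) :=
    integrable_gm (((hLip.continuous.pow 2).comp
      (continuous_const.sub continuous_id)).aestronglyMeasurable)
      (psf_shift_sq_abs_le hν hK0 hKM x) hσ
  have hJint : Integrable (fun θ => (shortPSF K ν (x - θ) - c) ^ 2) (gm σ) := by
    apply integrable_gm (B := (M/ν)^2)
      (((hLip.continuous.comp (continuous_const.sub continuous_id)).sub
        continuous_const).pow 2).aestronglyMeasurable _ hσ
    intro θ
    show |(shortPSF K ν (x - θ) - c) ^ 2| ≤ (M/ν)^2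
    rw [abs_of_nonneg (sq_nonneg _)]
    have h1 := psf_nonneg hν hK0 (x - θ); have h2 := psf_le hν hKM (x - θ)
    have h3 := psf_nonneg hν hK0 x; have h4 := psf_le hν hKM x
    nlinarith
  have hexp : ∫ θ, (shortPSF K ν (x - θ) - c) ^ 2 ∂(gm σ)
      = (∫ θ, shortPSF K ν (x - θ) ^ 2 ∂(gm σ))
        - 2 * c * (∫ θ, shortPSF K ν (x - θ) ∂(gm σ)) + c^2 := by
    have : (fun θ => (shortPSF K ν (x - θ) - c) ^ 2)
        = fun θ => shortPSF K ν (x - θ) ^ 2 - (2*c) * shortPSF K ν (x - θ) + c^2 := by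
      funext θ; ring
    rw [this, integral_add (by exact (hI2.sub (hI1.const_mul (2*c)))) (integrable_const _),
      integral_sub hI2 (hI1.const_mul (2*c)), integral_const_mul]
    simp [measure_univ]
    try ring
  have hJle : ∫ θ, (shortPSF K ν (x - θ) - c) ^ 2 ∂(gm σ)
      ≤ ∫ θ, (L:ℝ)^2 * θ^2 ∂(gm σ) := by
    apply integral_mono hJint ((integrable_sq_gm hσ).const_mul _)
    intro θ
    have habs : |shortPSF K ν (x - θ) - c| ≤ (L:ℝ) * |θ| := by
      have := hLip.dist_le_mul (x - θ) x
      rw [Real.dist_eq, Real.dist_eq] at this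
      simpa [abs_neg] using this
    calc (shortPSF K ν (x - θ) - c)^2 = |shortPSF K ν (x - θ) - c|^2 := (sq_abs _).symm
      _ ≤ ((L:ℝ) * |θ|)^2 := pow_le_pow_left₀ (abs_nonneg _) habs 2
      _ = (L:ℝ)^2 * θ^2 := by rw [mul_pow, sq_abs]
  rw [integral_const_mul, integral_sq_gm hσ] at hJle
  rw [Vnu_eq]
  nlinarith [sq_nonneg ((∫ θ, shortPSF K ν (x - θ) ∂(gm σ)) - c)]

lemma Vnu_le_div (hν : 0 < ν) (hK0 : ∀ x, 0 ≤ K x) (hKM : ∀ x, K x ≤ M)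
    (hKint : Integrable K)
    {L : NNReal} (hLip : LipschitzWith L (shortPSF K ν)) {σ : ℝ} (hσ : 0 < σ) (x : ℝ) :
    Vnu K ν σ x ≤ ((∫ y, shortPSF K ν y ^ 2) / Real.sqrt (2*π)) / σ := by
  have hg2m : AEStronglyMeasurable (fun θ => shortPSF K ν (x - θ) ^ 2) volume :=
    ((hLip.continuous.pow 2).comp (continuous_const.sub continuous_id)).aestronglyMeasurable
  have hI2 : ∫ θ, shortPSF K ν (x - θ) ^ 2 ∂(gm σ)
      ≤ ((∫ y, shortPSF K ν y ^ 2) / Real.sqrt (2*π)) / σ := by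
    rw [integral_gm hσ]
    have step : ∫ θ, shortPSF K ν (x - θ) ^ 2 * gphi σ θ
        ≤ ∫ θ, shortPSF K ν (x - θ) ^ 2 * (Real.sqrt (2 * π * σ^2))⁻¹ := by
      apply integral_mono
        (integrable_mul_gphi hg2m (fun θ => sq_nonneg _)
          (fun θ => abs_le.mp (psf_shift_sq_abs_le hν hK0 hKM x θ) |>.2) σ)
        (((psf_sq_int hν hK0 hKM hKint hLip).comp_sub_left x).mul_const _)
      intro θ
      exact mul_le_mul_of_nonneg_left (gphi_le hσ θ) (sq_nonneg _)
    rw [integral_mul_const, integral_sub_left_eq_self (fun y => shortPSF K ν y ^ 2) volume x]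
      at step
    have hsqrt : Real.sqrt (2 * π * σ^2) = Real.sqrt (2*π) * σ := by
      rw [Real.sqrt_mul (by positivity), Real.sqrt_sq hσ.le]
    rw [hsqrt] at step
    calc ∫ θ, shortPSF K ν (x - θ) ^ 2 * gphi σ θ
        ≤ (∫ y, shortPSF K ν y ^ 2) * (Real.sqrt (2*π) * σ)⁻¹ := step
      _ = ((∫ y, shortPSF K ν y ^ 2) / Real.sqrt (2*π)) / σ := by
          rw [mul_inv]; ring
  rw [Vnu_eq]
  nlinarith [sq_nonneg (∫ θ, shortPSF K ν (x - θ) ∂(gm σ))]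

lemma Dtv_comm (σ σ' : ℝ) : Dtv σ σ' = Dtv σ' σ := by
  rw [Dtv, Dtv]; simp_rw [abs_sub_comm]

lemma F_nonneg (hν : 0 < ν) (hK0 : ∀ x, 0 ≤ K x) (hKM : ∀ x, K x ≤ M)
    {L : NNReal} (hLip : LipschitzWith L (shortPSF K ν)) {σ : ℝ} (hσ : 0 < σ) :
    0 ≤ ⨆ x : ℝ, Vnu K ν σ x :=
  le_trans (Vnu_nonneg hν hK0 hKM hLip σ 0)
    (le_ciSup (Vnu_bddAbove hν hK0 hKM hLip hσ) 0)

lemma F_diff_le (hν : 0 < ν) (hK0 : ∀ x, 0 ≤ K x) (hKM : ∀ x, K x ≤ M)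
    {L : NNReal} (hLip : LipschitzWith L (shortPSF K ν)) {σ σ' : ℝ}
    (hσ : 0 < σ) (hσ' : 0 < σ') :
    (⨆ x : ℝ, Vnu K ν σ x) ≤ (⨆ x : ℝ, Vnu K ν σ' x) + 3 * (M/ν)^2 * Dtv σ σ' := by
  apply ciSup_le
  intro x
  exact le_trans (Vnu_diff_le hν hK0 hKM hLip hσ hσ' x)
    (add_le_add_left (le_ciSup (Vnu_bddAbove hν hK0 hKM hLip hσ') x) _)

lemma F_contOn (hν : 0 < ν) (hK0 : ∀ x, 0 ≤ K x) (hKM : ∀ x, K x ≤ M)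
    {L : NNReal} (hLip : LipschitzWith L (shortPSF K ν)) :
    ContinuousOn (fun σ => ⨆ x : ℝ, Vnu K ν σ x) (Set.Ioi (0:ℝ)) := by
  intro σ₀ hσ₀
  rw [Set.mem_Ioi] at hσ₀
  set F := fun σ => ⨆ x : ℝ, Vnu K ν σ x with hF
  have habs : Tendsto (fun σ => |F σ - F σ₀|) (nhdsWithin σ₀ (Set.Ioi 0)) (nhds 0) := by
    apply squeeze_zero' (Eventually.of_forall fun σ => abs_nonneg _)
      (g := fun σ => 3 * (M/ν)^2 * Dtv σ σ₀)
    · filter_upwards [self_mem_nhdsWithin] with σ hσ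
      rw [Set.mem_Ioi] at hσ
      rw [abs_sub_le_iff]
      constructor
      · have := F_diff_le hν hK0 hKM hLip hσ hσ₀; linarith [this]
      · have := F_diff_le hν hK0 hKM hLip hσ₀ hσ
        rw [Dtv_comm σ₀ σ] at this; linarith [this]
    · have := (Dtv_tendsto hσ₀).const_mul (3 * (M/ν)^2)
      simpa using this
  have hsub : Tendsto (fun σ => F σ - F σ₀) (nhdsWithin σ₀ (Set.Ioi 0)) (nhds 0) :=
    (tendsto_zero_iff_abs_tendsto_zero _).mpr habs
  have : Tendsto F (nhdsWithin σ₀ (Set.Ioi 0)) (nhds (F σ₀)) := by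
    have h2 := hsub.add (tendsto_const_nhds (x := F σ₀))
    simpa using h2
  exact this

end Main

theorem supVar_attains_max_of_lipschitz
    (K : ℝ → ℝ) (M ν : ℝ) (hν : 0 < ν)
    (hK0 : ∀ x, 0 ≤ K x) (hKM : ∀ x, K x ≤ M)
    (hKeven : ∀ x, K (-x) = K x) (hKint : Integrable K)
    (L : NNReal) (hLip : LipschitzWith L (shortPSF K ν)) :
    ∃ σstar ∈ Set.Ioi (0 : ℝ),
      ∀ σ ∈ Set.Ioi (0 : ℝ), (⨆ x : ℝ, Vnu K ν σ x) ≤ ⨆ x : ℝ, Vnu K ν σstar x := by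
  set F := fun σ => ⨆ x : ℝ, Vnu K ν σ x with hF
  by_cases hz : ∀ σ ∈ Set.Ioi (0:ℝ), F σ ≤ 0
  · exact ⟨1, by norm_num, fun σ hσ =>
      le_trans (hz σ hσ) (F_nonneg hν hK0 hKM hLip one_pos)⟩
  push_neg at hz
  obtain ⟨σ₀, hσ₀, hpos⟩ := hz
  rw [Set.mem_Ioi] at hσ₀
  set c := F σ₀ with hc
  set A := (L:ℝ)^2 * msq with hA
  have hA0 : 0 ≤ A := mul_nonneg (sq_nonneg _) msq_nonneg
  set C := (∫ y, shortPSF K ν y ^ 2) / Real.sqrt (2*π) with hC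
  have hC0 : 0 ≤ C := div_nonneg (integral_nonneg fun y => sq_nonneg _) (Real.sqrt_nonneg _)
  set a := min σ₀ (Real.sqrt (c/(2*(A+1)))) with ha
  set b := max σ₀ (2*(C+1)/c) with hb
  have ha0 : 0 < a := lt_min hσ₀ (Real.sqrt_pos.mpr (by positivity))
  have haσ₀ : a ≤ σ₀ := min_le_left _ _
  have hσ₀b : σ₀ ≤ b := le_max_left _ _
  -- F bounds
  have hFA : ∀ σ : ℝ, 0 < σ → F σ ≤ A * σ^2 := by
    intro σ hσ
    apply ciSup_le
    intro x
    calc Vnu K ν σ x ≤ (L:ℝ)^2 * (σ^2 * msq) := Vnu_le_msq hν hK0 hKM hLip hσ x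
      _ = A * σ^2 := by rw [hA]; ring
  have hFC : ∀ σ : ℝ, 0 < σ → F σ ≤ C / σ := by
    intro σ hσ
    exact ciSup_le fun x => Vnu_le_div hν hK0 hKM hKint hLip hσ x
  -- max on [a,b]
  obtain ⟨σs, hσs_mem, hσs_max⟩ :=
    isCompact_Icc.exists_isMaxOn (s := Set.Icc a b) ⟨σ₀, haσ₀, hσ₀b⟩
      ((F_contOn hν hK0 hKM hLip).mono (fun t ht => lt_of_lt_of_le ha0 ht.1))
  refine ⟨σs, lt_of_lt_of_le ha0 hσs_mem.1, fun σ hσ => ?_⟩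
  rw [Set.mem_Ioi] at hσ
  have hc_le : c ≤ F σs := hσs_max ⟨haσ₀, hσ₀b⟩
  by_cases hin : σ ∈ Set.Icc a b
  · exact hσs_max hin
  · have hout : F σ < c := by
      rw [Set.mem_Icc, not_and_or] at hin
      rcases hin with hlt | hgt
      · push_neg at hlt
        have hlt2 : σ < Real.sqrt (c/(2*(A+1))) := lt_of_lt_of_le hlt (min_le_right _ _)
        have hsq : σ^2 < c/(2*(A+1)) := by
          have := Real.sq_sqrt (le_of_lt (show (0:ℝ) < c/(2*(A+1)) by positivity))
          nlinarith [Real.sqrt_nonneg (c/(2*(A+1)))]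
        calc F σ ≤ A * σ^2 := hFA σ hσ
          _ ≤ (A+1) * σ^2 := by nlinarith [sq_nonneg σ]
          _ < (A+1) * (c/(2*(A+1))) := by
              apply mul_lt_mul_of_pos_left hsq (by positivity)
          _ = c/2 := by field_simp
          _ < c := by linarith
      · push_neg at hgt
        have hgt2 : 2*(C+1)/c < σ := lt_of_le_of_lt (le_max_right _ _) hgt
        have hstep : C / σ < c := by
          rw [div_lt_iff₀ hpos] at hgt2
          rw [div_lt_iff₀ hσ]
          nlinarith
        exact lt_of_le_of_lt (hFC σ hσ) hstep
    linarith [hout, hc_le]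
end

section
/- (Theorem 2, compact support case.) Let K : ℝ → ℝ be a smoothing kernel with bound M, let ν > 0, and set h_ν(x) = (1/ν)·K(x/ν). Assume h_ν is continuous on ℝ and has compact support. Then the function F : (0,∞) → ℝ defined by F(σ) = sup_{x ∈ ℝ} V_ν(x,σ) attains a global maximum on (0,∞); i.e., there exists σ* ∈ (0,∞) such that F(σ) ≤ F(σ*) for all σ ∈ (0,∞). -/
open MeasureTheory ProbabilityTheory Real Filter
open Topology NNReal

noncomputable def stdG : Measure ℝ := gaussianReal 0 1

instance : IsProbabilityMeasure stdG := by unfold stdG; infer_instance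

/-- change of variables -/
lemma integral_gaussian_scale (f : ℝ → ℝ) (hf : Continuous f) {σ : ℝ} (_hσ : 0 < σ) :
    ∫ θ, f θ ∂(gaussianReal 0 (σ ^ 2).toNNReal) = ∫ u, f (σ * u) ∂stdG := by
  have hmap : gaussianReal 0 (σ ^ 2).toNNReal = stdG.map (σ * ·) := by
    unfold stdG
    rw [gaussianReal_map_const_mul]
    congr 1
    · ring
    · ext
      simp [Real.toNNReal, max_eq_left (sq_nonneg σ)]
  rw [hmap, integral_map (measurable_const_mul σ).aemeasurable hf.aestronglyMeasurable]

/-- generic integrability of bounded a.e.-strongly-measurable functions wrt stdG -/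
lemma int_of_bdd {X : ℝ → ℝ} (hm : AEStronglyMeasurable X stdG) {C : ℝ}
    (hC : ∀ u, |X u| ≤ C) : Integrable X stdG :=
  Integrable.mono' (integrable_const C) hm (ae_of_all _ hC)

/-- continuity of parametrized integral -/
lemma cont_int (f : ℝ → ℝ) (hf : Continuous f) (C : ℝ) (hC : ∀ x, |f x| ≤ C) :
    Continuous (fun p : ℝ × ℝ => ∫ u, f (p.2 - p.1 * u) ∂stdG) := by
  rw [continuous_iff_continuousAt]
  intro p₀
  apply continuousAt_of_dominated (bound := fun _ => C)
  · filter_upwards with p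
    exact (hf.comp (continuous_const.sub (continuous_const.mul continuous_id))).aestronglyMeasurable
  · filter_upwards with p
    exact ae_of_all _ fun u => hC _
  · exact integrable_const C
  · exact ae_of_all _ fun u =>
      (hf.comp (continuous_snd.sub (continuous_fst.mul continuous_const))).continuousAt

/-- expansion of second moment about a -/
lemma expand_sq {X : ℝ → ℝ} (hm : AEStronglyMeasurable X stdG) {C : ℝ}
    (hC : ∀ u, |X u| ≤ C) (a : ℝ) :
    ∫ u, (X u - a) ^ 2 ∂stdG
      = (∫ u, X u ^ 2 ∂stdG) - 2 * a * (∫ u, X u ∂stdG) + a ^ 2 := by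
  have hX : Integrable X stdG := int_of_bdd hm hC
  have hX2 : Integrable (fun u => X u ^ 2) stdG := by
    apply int_of_bdd (hm.mul hm |>.congr (ae_of_all _ fun u => (sq (X u)).symm ▸ rfl)) (C := C ^ 2)
    intro u
    rw [abs_pow] at *
    exact pow_le_pow_left₀ (abs_nonneg _) (hC u) 2
  have : ∀ u, (X u - a) ^ 2 = X u ^ 2 - (2 * a) * X u + a ^ 2 := fun u => by ring
  simp_rw [this]
  rw [integral_add (by exact (hX2.sub (hX.const_mul (2 * a)))) (integrable_const _),
    integral_sub hX2 (hX.const_mul (2 * a)), MeasureTheory.integral_const_mul, integral_const]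
  simp [mul_assoc]


noncomputable def Gfun (g : ℝ → ℝ) (σ x : ℝ) : ℝ :=
  (∫ u, g (x - σ * u) ^ 2 ∂stdG) - (∫ u, g (x - σ * u) ∂stdG) ^ 2

section G
variable {g : ℝ → ℝ} {B : ℝ}

lemma Xmeas (hgc : Continuous g) (σ x : ℝ) : AEStronglyMeasurable (fun u => g (x - σ * u)) stdG :=
  (hgc.comp (continuous_const.sub (continuous_const.mul continuous_id))).aestronglyMeasurable

lemma Gfun_nonneg (hgc : Continuous g) (hgB : ∀ x, |g x| ≤ B) (σ x : ℝ) : 0 ≤ Gfun g σ x := by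
  set X : ℝ → ℝ := fun u => g (x - σ * u) with hX
  have hm := Xmeas hgc σ x
  have hC : ∀ u, |X u| ≤ B := fun u => hgB _
  have h := expand_sq hm hC (∫ u, X u ∂stdG)
  have h0 : 0 ≤ ∫ u, (X u - ∫ u, X u ∂stdG) ^ 2 ∂stdG :=
    integral_nonneg fun u => sq_nonneg _
  rw [h] at h0
  unfold Gfun
  nlinarith [sq_nonneg (∫ u, X u ∂stdG)]

lemma Gfun_le_dist (hgc : Continuous g) (hgB : ∀ x, |g x| ≤ B) (σ x a : ℝ) : Gfun g σ x ≤ ∫ u, (g (x - σ * u) - a) ^ 2 ∂stdG := by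
  set X : ℝ → ℝ := fun u => g (x - σ * u) with hX
  have hm := Xmeas hgc σ x
  have hC : ∀ u, |X u| ≤ B := fun u => hgB _
  have h := expand_sq hm hC a
  unfold Gfun
  nlinarith [sq_nonneg ((∫ u, X u ∂stdG) - a)]

lemma Gfun_le_intsq (σ x : ℝ) : Gfun g σ x ≤ ∫ u, g (x - σ * u) ^ 2 ∂stdG := by
  unfold Gfun; nlinarith [sq_nonneg (∫ u, g (x - σ * u) ∂stdG)]

lemma Gfun_cont (hgc : Continuous g) (hgB : ∀ x, |g x| ≤ B) : Continuous (fun p : ℝ × ℝ => Gfun g p.1 p.2) := by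
  have h1 := cont_int g hgc B hgB
  have h2 := cont_int (fun x => g x ^ 2) (hgc.pow 2) (B ^ 2) (fun x => by
    rw [abs_pow]; exact pow_le_pow_left₀ (abs_nonneg _) (hgB x) 2)
  exact h2.sub (h1.pow 2)

lemma Gfun_glob_bound (hgc : Continuous g) (hgB : ∀ x, |g x| ≤ B) (σ x : ℝ) : Gfun g σ x ≤ B ^ 2 := by
  refine (Gfun_le_intsq σ x).trans ?_
  have : ∫ u, g (x - σ * u) ^ 2 ∂stdG ≤ ∫ _u, B ^ 2 ∂stdG := by
    apply integral_mono _ (integrable_const _)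
    · intro u
      show g (x - σ * u) ^ 2 ≤ B ^ 2
      have h := hgB (x - σ * u)
      nlinarith [abs_nonneg (g (x - σ * u)), sq_abs (g (x - σ * u))]
    · apply int_of_bdd (Xmeas (g := fun y => g y ^ 2) (hgc.pow 2) σ x) (C := B ^ 2)
      intro u; show |g (x - σ * u) ^ 2| ≤ B ^ 2
      rw [abs_pow]; exact pow_le_pow_left₀ (abs_nonneg _) (hgB _) 2
  simpa using this

end G

lemma stdG_toReal_mono {s t : Set ℝ} (h : s ⊆ t) : (stdG s).toReal ≤ (stdG t).toReal :=
  ENNReal.toReal_mono (measure_ne_top _ _) (measure_mono h)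

lemma stdG_tail_tendsto :
    Tendsto (fun T : ℝ => (stdG {u : ℝ | T ≤ |u|}).toReal) atTop (𝓝 0) := by
  have h := tendsto_measure_iInter_atTop (μ := stdG)
    (s := fun T : ℝ => {u : ℝ | T ≤ |u|}) ?_ ?_ ?_
  · have he : ⋂ T : ℝ, {u : ℝ | T ≤ |u|} = ∅ := by
      ext u; simp only [Set.mem_iInter, Set.mem_setOf_eq, Set.mem_empty_iff_false, iff_false]
      push_neg; exact ⟨|u| + 1, by linarith⟩
    rw [he] at h
    have h2 := (ENNReal.tendsto_toReal (measure_ne_top stdG ∅)).comp h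
    rw [measure_empty, ENNReal.toReal_zero] at h2
    exact h2
  · exact fun T => (measurableSet_le measurable_const measurable_id.abs).nullMeasurableSet
  · intro a b hab u hu; exact le_trans hab hu
  · exact ⟨0, measure_ne_top _ _⟩

lemma stdG_Icc_le (l r : ℝ) (hlr : l ≤ r) :
    (stdG (Set.Icc l r)).toReal ≤ (√(2 * π))⁻¹ * (r - l) := by
  have hpdf : ∀ x : ℝ, gaussianPDF 0 1 x ≤ ENNReal.ofReal (√(2 * π))⁻¹ := by
    intro x
    rw [gaussianPDF]
    apply ENNReal.ofReal_le_ofReal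
    rw [gaussianPDFReal]
    have h1 : rexp (-(x - 0) ^ 2 / (2 * (1:ℝ≥0))) ≤ 1 := by
      rw [Real.exp_le_one_iff]
      have h2 : ((2 * (1:ℝ≥0) : ℝ)) = 2 := by norm_num
      rw [h2]
      linarith [sq_nonneg (x - 0)]
    calc (√(2 * π * (1:ℝ≥0)))⁻¹ * rexp (-(x - 0) ^ 2 / (2 * (1:ℝ≥0)))
        ≤ (√(2 * π * (1:ℝ≥0)))⁻¹ * 1 := by
          apply mul_le_mul_of_nonneg_left h1 (by positivity)
      _ = (√(2 * π))⁻¹ := by norm_num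
  have key : stdG (Set.Icc l r) ≤ ENNReal.ofReal (√(2 * π))⁻¹ * volume (Set.Icc l r) := by
    unfold stdG
    rw [gaussianReal_apply 0 one_ne_zero]
    calc ∫⁻ x in Set.Icc l r, gaussianPDF 0 1 x
        ≤ ∫⁻ _ in Set.Icc l r, ENNReal.ofReal (√(2 * π))⁻¹ := lintegral_mono fun x => hpdf x
      _ = ENNReal.ofReal (√(2 * π))⁻¹ * volume (Set.Icc l r) := by
          rw [setLIntegral_const, mul_comm]
  have h2 := ENNReal.toReal_mono ?_ key
  · rw [ENNReal.toReal_mul, Real.volume_Icc] at h2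
    calc (stdG (Set.Icc l r)).toReal ≤ _ := h2
      _ ≤ (√(2 * π))⁻¹ * (r - l) := by
        rw [ENNReal.toReal_ofReal (by positivity), ENNReal.toReal_ofReal (by linarith)]
  · rw [Real.volume_Icc]
    exact ENNReal.mul_ne_top ENNReal.ofReal_ne_top ENNReal.ofReal_ne_top

lemma intsq_le_indic {g : ℝ → ℝ} {B : ℝ} (hgc : Continuous g) (hgB : ∀ x, |g x| ≤ B)
    {s : Set ℝ} (hs : MeasurableSet s) {σ x : ℝ} (h0 : ∀ u, u ∉ s → g (x - σ * u) = 0) :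
    ∫ u, g (x - σ * u) ^ 2 ∂stdG ≤ B ^ 2 * (stdG s).toReal := by
  have hle : ∀ u, g (x - σ * u) ^ 2 ≤ s.indicator (fun _ => B ^ 2) u := by
    intro u
    by_cases hu : u ∈ s
    · rw [Set.indicator_of_mem hu]
      have h := hgB (x - σ * u)
      nlinarith [sq_abs (g (x - σ * u)), abs_nonneg (g (x - σ * u))]
    · rw [Set.indicator_of_notMem hu, h0 u hu]; norm_num
  calc ∫ u, g (x - σ * u) ^ 2 ∂stdG
      ≤ ∫ u, s.indicator (fun _ => B ^ 2) u ∂stdG := by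
        apply integral_mono _ ((integrable_const _).indicator hs) hle
        apply int_of_bdd (Xmeas (g := fun y => g y ^ 2) (hgc.pow 2) σ x) (C := B ^ 2)
        intro u; show |g (x - σ * u) ^ 2| ≤ B ^ 2
        rw [abs_pow]; exact pow_le_pow_left₀ (abs_nonneg _) (hgB _) 2
    _ = B ^ 2 * (stdG s).toReal := by
        rw [integral_indicator_const _ hs]; simp [mul_comm, measureReal_def]

lemma dist_int_le {g : ℝ → ℝ} {B : ℝ} (hgc : Continuous g) (hgB : ∀ x, |g x| ≤ B)
    {ε δ σ x : ℝ} (hε : 0 ≤ ε) (hmod : ∀ s t : ℝ, |s - t| < δ → |g s - g t| ≤ ε) :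
    ∫ u, (g (x - σ * u) - g x) ^ 2 ∂stdG
      ≤ ε ^ 2 + (2 * B) ^ 2 * (stdG {u : ℝ | δ ≤ |σ * u|}).toReal := by
  have hs : MeasurableSet {u : ℝ | δ ≤ |σ * u|} :=
    measurableSet_le measurable_const (measurable_id.const_mul σ).abs
  have hle : ∀ u, (g (x - σ * u) - g x) ^ 2
      ≤ ε ^ 2 + {u : ℝ | δ ≤ |σ * u|}.indicator (fun _ => (2 * B) ^ 2) u := by
    intro u
    by_cases hu : δ ≤ |σ * u|
    · rw [Set.indicator_of_mem (show u ∈ {u : ℝ | δ ≤ |σ * u|} from hu)]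
      have h1 := hgB (x - σ * u); have h2 := hgB x
      nlinarith [sq_abs (g (x - σ * u) - g x), abs_sub_abs_le_abs_sub (g (x - σ * u)) (g x),
        abs_sub (g (x - σ * u)) (g x), abs_nonneg (g (x - σ * u) - g x),
        sq_nonneg ε]
    · rw [Set.indicator_of_notMem (show u ∉ {u : ℝ | δ ≤ |σ * u|} from hu)]
      have hd : |(x - σ * u) - x| < δ := by
        rw [show (x - σ * u) - x = -(σ * u) by ring, abs_neg]
        push_neg at hu; exact hu
      have := hmod _ _ hd
      have h3 : (g (x - σ * u) - g x) ^ 2 ≤ ε ^ 2 := by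
        nlinarith [sq_abs (g (x - σ * u) - g x), abs_nonneg (g (x - σ * u) - g x)]
      linarith
  have hXint : Integrable (fun u => (g (x - σ * u) - g x) ^ 2) stdG := by
    apply int_of_bdd (Xmeas (g := fun y => (g y - g x) ^ 2) (((hgc.sub continuous_const).pow 2)) σ x)
      (C := (2 * B) ^ 2)
    intro u
    have h1 := hgB (x - σ * u); have h2 := hgB x
    show |(g (x - σ * u) - g x) ^ 2| ≤ (2 * B) ^ 2
    rw [abs_pow]
    apply pow_le_pow_left₀ (abs_nonneg _) _ 2
    calc |g (x - σ * u) - g x| ≤ |g (x - σ * u)| + |g x| := abs_sub _ _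
      _ ≤ 2 * B := by linarith
  calc ∫ u, (g (x - σ * u) - g x) ^ 2 ∂stdG
      ≤ ∫ u, (ε ^ 2 + {u : ℝ | δ ≤ |σ * u|}.indicator (fun _ => (2 * B) ^ 2) u) ∂stdG := by
        exact integral_mono hXint ((integrable_const _).add ((integrable_const _).indicator hs)) hle
    _ = ε ^ 2 + (2 * B) ^ 2 * (stdG {u : ℝ | δ ≤ |σ * u|}).toReal := by
        rw [integral_add (integrable_const _) ((integrable_const _).indicator hs),
          integral_const, integral_indicator_const _ hs]
        simp [mul_comm, measureReal_def]

set_option maxHeartbeats 1000000 in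
theorem supVar_attains_max_of_compactSupport
    (K : ℝ → ℝ) (M ν : ℝ) (hν : 0 < ν)
    (hK0 : ∀ x, 0 ≤ K x) (hKM : ∀ x, K x ≤ M)
    (hKeven : ∀ x, K (-x) = K x) (hKint : Integrable K)
    (hcont : Continuous (shortPSF K ν)) (hsupp : HasCompactSupport (shortPSF K ν)) :
    ∃ σstar ∈ Set.Ioi (0 : ℝ),
      ∀ σ ∈ Set.Ioi (0 : ℝ), (⨆ x : ℝ, Vnu K ν σ x) ≤ ⨆ x : ℝ, Vnu K ν σstar x := by
  set g : ℝ → ℝ := shortPSF K ν with hg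
  have hgc : Continuous g := hcont
  set B : ℝ := (1 / ν) * M with hBdef
  have hg0 : ∀ x, 0 ≤ g x := fun x => mul_nonneg (by positivity) (hK0 _)
  have hgB : ∀ x, |g x| ≤ B := by
    intro x
    rw [abs_of_nonneg (hg0 x)]
    exact mul_le_mul_of_nonneg_left (hKM _) (by positivity)
  have hB0 : 0 ≤ B := le_trans (abs_nonneg _) (hgB 0)
  -- support radius
  obtain ⟨R, hR0, hRsub⟩ := (hsupp.isBounded).subset_closedBall_lt 0 0
  rw [Real.closedBall_eq_Icc, zero_sub, zero_add] at hRsub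
  -- supp fact : if g y ≠ 0 then y ∈ Icc (-R) R
  have hsuppf : ∀ y : ℝ, g y ≠ 0 → y ∈ Set.Icc (-R) R := by
    intro y hy
    exact hRsub (subset_tsupport g hy)
  -- key identity
  have hVG : ∀ σ : ℝ, 0 < σ → ∀ x, Vnu K ν σ x = Gfun g σ x := by
    intro σ hσ x
    unfold Vnu Gfun
    rw [integral_gaussian_scale (fun θ => g (x - θ) ^ 2)
        (((hgc.comp (continuous_const.sub continuous_id)).pow 2)) hσ,
      integral_gaussian_scale (fun θ => g (x - θ))
        ((hgc.comp (continuous_const.sub continuous_id))) hσ]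
  have hG0 := Gfun_nonneg hgc hgB
  have hGB := Gfun_glob_bound hgc hgB
  have hbdd : ∀ σ : ℝ, BddAbove (Set.range fun x => Vnu K ν σ x) → True := fun _ _ => trivial
  by_cases hpos : ∃ σ : ℝ, 0 < σ ∧ ∃ x : ℝ, 0 < Gfun g σ x
  · obtain ⟨σ0, hσ0, x0, hx0⟩ := hpos
    obtain ⟨v, hv⟩ : ∃ v : ℝ, v = Gfun g σ0 x0 := ⟨_, rfl⟩
    rw [← hv] at hx0
    -- large σ bound
    set c0 : ℝ := (√(2 * π))⁻¹ with hc0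
    have hc0nn : 0 ≤ c0 := by positivity
    have hlarge : ∀ σ : ℝ, 0 < σ → ∀ x : ℝ, Gfun g σ x ≤ B ^ 2 * (c0 * (2 * R)) / σ := by
      intro σ hσ x
      have h1 := Gfun_le_intsq (g := g) σ x
      have h2 : ∫ u, g (x - σ * u) ^ 2 ∂stdG
          ≤ B ^ 2 * (stdG (Set.Icc ((x - R) / σ) ((x + R) / σ))).toReal := by
        apply intsq_le_indic hgc hgB measurableSet_Icc
        intro u hu
        by_contra hne
        apply hu
        obtain ⟨h3, h4⟩ := hsuppf _ hne
        constructor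
        · rw [div_le_iff₀ hσ]; nlinarith
        · rw [le_div_iff₀ hσ]; nlinarith
      have h3 : (stdG (Set.Icc ((x - R) / σ) ((x + R) / σ))).toReal
          ≤ c0 * ((x + R) / σ - (x - R) / σ) := by
        apply stdG_Icc_le
        gcongr
        linarith
      have h4 : (x + R) / σ - (x - R) / σ = 2 * R / σ := by field_simp; ring
      rw [h4] at h3
      calc Gfun g σ x ≤ _ := h1
        _ ≤ B ^ 2 * (c0 * (2 * R / σ)) := by nlinarith
        _ = B ^ 2 * (c0 * (2 * R)) / σ := by field_simp
    -- tail quantities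
    have htail := stdG_tail_tendsto
    -- choose b
    set Cb : ℝ := B ^ 2 * (c0 * (2 * R)) with hCb
    have hCb0 : 0 ≤ Cb := by positivity
    obtain ⟨b, hb0, hσ0b, hCbvb⟩ : ∃ b : ℝ, 0 < b ∧ σ0 ≤ b ∧ Cb < v * b := by
      refine ⟨max σ0 (Cb / v) + 1, ?_, ?_, ?_⟩
      · have := le_max_left σ0 (Cb / v); linarith
      · have := le_max_left σ0 (Cb / v); linarith
      · have h4 := le_max_right σ0 (Cb / v)
        have h5 : Cb = v * (Cb / v) := by field_simp
        nlinarith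
    have hblarge : ∀ σ : ℝ, b ≤ σ → ∀ x : ℝ, Gfun g σ x < v := by
      intro σ hσ x
      have hσpos : 0 < σ := lt_of_lt_of_le hb0 hσ
      have h1 := hlarge σ hσpos x
      have h2 : Cb / σ ≤ Cb / b := by gcongr
      have h3 : Cb / b < v := by rw [div_lt_iff₀ hb0]; linarith
      calc Gfun g σ x ≤ Cb / σ := h1
        _ ≤ Cb / b := h2
        _ < v := h3
    -- uniform continuity and small σ
    have hgu : UniformContinuous g := hsupp.uniformContinuous_of_continuous hgc
    have hε0 : 0 < √v / 2 := by positivity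
    obtain ⟨δ, hδ0, hδ⟩ := Metric.uniformContinuous_iff.mp hgu (√v / 2) hε0
    have hmod : ∀ s t : ℝ, |s - t| < δ → |g s - g t| ≤ √v / 2 := by
      intro s t hst
      have := hδ (a := s) (b := t) (by rwa [Real.dist_eq])
      rw [Real.dist_eq] at this
      exact this.le
    have hw : 0 < v / (2 * ((2 * B) ^ 2 + 1)) := by positivity
    obtain ⟨T0, hT0⟩ := eventually_atTop.mp (htail.eventually_lt_const hw)
    obtain ⟨a, ha0, haσ0, hδa⟩ :
        ∃ a : ℝ, 0 < a ∧ a ≤ σ0 ∧ T0 ≤ δ / a := by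
      refine ⟨min σ0 (δ / max T0 1), ?_, min_le_left _ _, ?_⟩
      · have h1 : (0:ℝ) < max T0 1 := lt_of_lt_of_le one_pos (le_max_right _ _)
        exact lt_min hσ0 (by positivity)
      · have h1 : (0:ℝ) < max T0 1 := lt_of_lt_of_le one_pos (le_max_right _ _)
        have h2 : min σ0 (δ / max T0 1) ≤ δ / max T0 1 := min_le_right _ _
        have h3 : 0 < min σ0 (δ / max T0 1) := lt_min hσ0 (by positivity)
        have h4 : max T0 1 ≤ δ / min σ0 (δ / max T0 1) := by
          rw [le_div_iff₀ h3]
          calc max T0 1 * min σ0 (δ / max T0 1) ≤ max T0 1 * (δ / max T0 1) := by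
                apply mul_le_mul_of_nonneg_left h2 h1.le
            _ = δ := by field_simp
        exact le_trans (le_max_left _ _) h4
    have hsmall : ∀ σ : ℝ, 0 < σ → σ ≤ a → ∀ x : ℝ, Gfun g σ x < v := by
      intro σ hσ hσa x
      have h1 := Gfun_le_dist hgc hgB σ x (g x)
      have h2 := dist_int_le hgc hgB hε0.le hmod (σ := σ) (x := x)
      have hsub : {u : ℝ | δ ≤ |σ * u|} ⊆ {u : ℝ | δ / a ≤ |u|} := by
        intro u hu
        simp only [Set.mem_setOf_eq] at hu ⊢
        rw [abs_mul, abs_of_pos hσ] at hu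
        rw [div_le_iff₀ ha0]
        calc δ ≤ σ * |u| := hu
          _ ≤ a * |u| := mul_le_mul_of_nonneg_right hσa (abs_nonneg _)
          _ = |u| * a := mul_comm _ _
      have h3 : (stdG {u : ℝ | δ ≤ |σ * u|}).toReal ≤ (stdG {u : ℝ | δ / a ≤ |u|}).toReal :=
        stdG_toReal_mono hsub
      have h4 : (stdG {u : ℝ | δ / a ≤ |u|}).toReal < v / (2 * ((2 * B) ^ 2 + 1)) :=
        hT0 (δ / a) hδa
      have h5 : (√v / 2) ^ 2 = v / 4 := by
        rw [div_pow, sq_sqrt hx0.le]; norm_num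
      have h6 : (2 * B) ^ 2 * (stdG {u : ℝ | δ ≤ |σ * u|}).toReal
          ≤ ((2 * B) ^ 2 + 1) * (v / (2 * ((2 * B) ^ 2 + 1))) := by
        have hnn : (0:ℝ) ≤ (stdG {u : ℝ | δ ≤ |σ * u|}).toReal := ENNReal.toReal_nonneg
        nlinarith [sq_nonneg (2 * B)]
      have h7 : ((2 * B) ^ 2 + 1) * (v / (2 * ((2 * B) ^ 2 + 1))) = v / 2 := by
        field_simp
      calc Gfun g σ x ≤ _ := h1
        _ ≤ (√v / 2) ^ 2 + (2 * B) ^ 2 * (stdG {u : ℝ | δ ≤ |σ * u|}).toReal := h2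
        _ ≤ v / 4 + v / 2 := by rw [h5]; linarith
        _ < v := by linarith
    -- x large
    have hw2 : 0 < v / (B ^ 2 + 1) := by positivity
    obtain ⟨T2, hT2⟩ := eventually_atTop.mp (htail.eventually_lt_const hw2)
    obtain ⟨c, hcx0, hcR, hcT2⟩ :
        ∃ c : ℝ, |x0| ≤ c ∧ R ≤ c ∧ R + b * max T2 0 ≤ c := by
      refine ⟨max |x0| (R + b * max T2 0), le_max_left _ _, ?_, le_max_right _ _⟩
      have h1 : (0:ℝ) ≤ b * max T2 0 := mul_nonneg hb0.le (le_max_right _ _)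
      calc R ≤ R + b * max T2 0 := by linarith
        _ ≤ _ := le_max_right _ _
    have hxlarge : ∀ σ : ℝ, 0 < σ → σ ≤ b → ∀ x : ℝ, c ≤ |x| → Gfun g σ x < v := by
      intro σ hσ hσb x hx
      have hxR : R ≤ |x| := le_trans hcR hx
      have hmeas : MeasurableSet {u : ℝ | x - σ * u ∈ Set.Icc (-R) R} := by
        have : Measurable (fun u : ℝ => x - σ * u) :=
          measurable_const.sub (measurable_id.const_mul σ)
        exact this measurableSet_Icc
      have h2 : ∫ u, g (x - σ * u) ^ 2 ∂stdG
          ≤ B ^ 2 * (stdG {u : ℝ | x - σ * u ∈ Set.Icc (-R) R}).toReal := by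
        apply intsq_le_indic hgc hgB hmeas
        intro u hu
        by_contra hne
        exact hu (hsuppf _ hne)
      have hsub : {u : ℝ | x - σ * u ∈ Set.Icc (-R) R} ⊆ {u : ℝ | (|x| - R) / b ≤ |u|} := by
        intro u hu
        simp only [Set.mem_setOf_eq, Set.mem_Icc] at hu ⊢
        have habs : |x - σ * u| ≤ R := abs_le.mpr hu
        have h5 : |x| - R ≤ |σ * u| := by
          have := abs_sub_abs_le_abs_sub x (x - σ * u)
          have h6 : x - (x - σ * u) = σ * u := by ring
          rw [h6] at this
          linarith
        rw [abs_mul, abs_of_pos hσ] at h5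
        rw [div_le_iff₀ hb0]
        calc |x| - R ≤ σ * |u| := h5
          _ ≤ b * |u| := mul_le_mul_of_nonneg_right hσb (abs_nonneg _)
          _ = |u| * b := mul_comm _ _
      have h3 : (stdG {u : ℝ | x - σ * u ∈ Set.Icc (-R) R}).toReal
          ≤ (stdG {u : ℝ | (|x| - R) / b ≤ |u|}).toReal := stdG_toReal_mono hsub
      have hT2c : T2 ≤ (|x| - R) / b := by
        rw [le_div_iff₀ hb0]
        have h4 : b * max T2 0 ≤ |x| - R := by linarith [le_trans hcT2 hx]
        calc T2 * b ≤ max T2 0 * b := by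
              apply mul_le_mul_of_nonneg_right (le_max_left _ _) hb0.le
          _ = b * max T2 0 := mul_comm _ _
          _ ≤ |x| - R := h4
      have h4 : (stdG {u : ℝ | (|x| - R) / b ≤ |u|}).toReal < v / (B ^ 2 + 1) :=
        hT2 _ hT2c
      have hnn : (0:ℝ) ≤ (stdG {u : ℝ | x - σ * u ∈ Set.Icc (-R) R}).toReal :=
        ENNReal.toReal_nonneg
      have h7 : B ^ 2 * (v / (B ^ 2 + 1)) < v := by
        rw [mul_div_assoc']
        rw [div_lt_iff₀ (by positivity)]
        nlinarith
      calc Gfun g σ x ≤ _ := Gfun_le_intsq σ x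
        _ ≤ B ^ 2 * (stdG {u : ℝ | x - σ * u ∈ Set.Icc (-R) R}).toReal := h2
        _ ≤ B ^ 2 * (stdG {u : ℝ | (|x| - R) / b ≤ |u|}).toReal :=
            mul_le_mul_of_nonneg_left h3 (sq_nonneg B)
        _ ≤ B ^ 2 * (v / (B ^ 2 + 1)) := mul_le_mul_of_nonneg_left h4.le (sq_nonneg B)
        _ < v := h7
    -- compact box and maximum
    have hmem : (σ0, x0) ∈ Set.Icc a b ×ˢ Set.Icc (-c) c := by
      refine ⟨⟨haσ0, hσ0b⟩, ?_⟩
      have := abs_le.mp hcx0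
      exact ⟨by linarith [neg_abs_le x0, abs_le.mp (le_refl |x0|)], by linarith [le_abs_self x0]⟩
    obtain ⟨p, hpD, hpmax⟩ := (isCompact_Icc.prod isCompact_Icc).exists_isMaxOn
      ⟨(σ0, x0), hmem⟩ ((Gfun_cont hgc hgB).continuousOn)
    have hp1 : 0 < p.1 := lt_of_lt_of_le ha0 hpD.1.1
    have hvle : v ≤ Gfun g p.1 p.2 := by rw [hv]; exact hpmax hmem
    have hglobal : ∀ σ : ℝ, 0 < σ → ∀ x : ℝ, Gfun g σ x ≤ Gfun g p.1 p.2 := by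
      intro σ hσ x
      by_cases h1 : σ < a
      · exact le_trans (hsmall σ hσ h1.le x).le hvle
      by_cases h2 : b < σ
      · exact le_trans (hblarge σ h2.le x).le hvle
      push_neg at h1 h2
      by_cases h3 : c < |x|
      · exact le_trans (hxlarge σ hσ h2 x h3.le).le hvle
      push_neg at h3
      have hmem2 : (σ, x) ∈ Set.Icc a b ×ˢ Set.Icc (-c) c := by
        refine ⟨⟨h1, h2⟩, ?_⟩
        have := abs_le.mp h3
        exact ⟨this.1, this.2⟩
      exact hpmax hmem2
    -- conclude
    refine ⟨p.1, Set.mem_Ioi.mpr hp1, ?_⟩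
    intro σ hσ
    rw [Set.mem_Ioi] at hσ
    have hbdd2 : BddAbove (Set.range fun x => Vnu K ν p.1 x) := by
      refine ⟨B ^ 2, ?_⟩
      rintro y ⟨x, rfl⟩
      show Vnu K ν p.1 x ≤ B ^ 2
      rw [hVG p.1 hp1 x]
      exact hGB p.1 x
    apply ciSup_le
    intro x
    rw [hVG σ hσ x]
    calc Gfun g σ x ≤ Gfun g p.1 p.2 := hglobal σ hσ x
      _ = Vnu K ν p.1 p.2 := (hVG p.1 hp1 p.2).symm
      _ ≤ ⨆ x : ℝ, Vnu K ν p.1 x := le_ciSup hbdd2 p.2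
  · push_neg at hpos
    have hzero : ∀ σ : ℝ, 0 < σ → ∀ x : ℝ, Vnu K ν σ x = 0 := by
      intro σ hσ x
      rw [hVG σ hσ x]
      exact le_antisymm (hpos σ hσ x) (hG0 σ x)
    have hsup0 : ∀ σ : ℝ, 0 < σ → (⨆ x : ℝ, Vnu K ν σ x) = 0 := by
      intro σ hσ
      calc (⨆ x : ℝ, Vnu K ν σ x) = ⨆ _x : ℝ, (0:ℝ) := by
            congr 1; funext x; exact hzero σ hσ x
        _ = 0 := ciSup_const
    refine ⟨1, Set.mem_Ioi.mpr one_pos, ?_⟩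
    intro σ hσ
    rw [Set.mem_Ioi] at hσ
    rw [hsup0 σ hσ, hsup0 1 one_pos]
end

section
/- (Proposition 1.) Let K be the boxcar kernel and ν > 0, so that h_ν(x) = 1/(2ν) for |x| ≤ ν and 0 otherwise. Then σ ↦ V_ν(0,σ) is increasing on the interval (0, (Φ⁻¹(3/4))⁻¹·ν]: for all σ₁, σ₂ with 0 < σ₁ ≤ σ₂ and Φ(ν/σ₂) ≥ 3/4 (equivalently σ₂ ≤ (Φ⁻¹(3/4))⁻¹·ν ≈ 1.48·ν), one has V_ν(0,σ₁) ≤ V_ν(0,σ₂). -/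
open MeasureTheory ProbabilityTheory Real Filter

/-- The boxcar kernel: `K(x) = 1/2` for `|x| ≤ 1`, 0 otherwise. -/
noncomputable def boxcar (x : ℝ) : ℝ := if |x| ≤ 1 then 1 / 2 else 0

/-- `Φ`, the standard normal CDF. -/
noncomputable def stdNormalCDF (x : ℝ) : ℝ := ProbabilityTheory.cdf (gaussianReal 0 1) x

lemma shortPSF_boxcar_eq (ν : ℝ) (hν : 0 < ν) :
    (fun θ => shortPSF boxcar ν (0 - θ)) =
      Set.indicator (Set.Icc (-ν) ν) (fun _ => 1/(2*ν)) := by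
  funext θ
  simp only [shortPSF, boxcar, zero_sub, Set.indicator_apply, Set.mem_Icc]
  have h : |(-θ) / ν| ≤ 1 ↔ (-ν ≤ θ ∧ θ ≤ ν) := by
    rw [abs_div, abs_of_pos hν, div_le_one hν, abs_neg, abs_le]
  rcases le_or_gt |(-θ)/ν| 1 with h1 | h1
  · rw [if_pos h1, if_pos (h.mp h1)]; ring
  · rw [if_neg h1.not_ge, if_neg (fun hh => h1.not_ge (h.mpr hh))]; ring

lemma shortPSF_boxcar_sq_eq (ν : ℝ) (hν : 0 < ν) :
    (fun θ => (shortPSF boxcar ν (0 - θ)) ^ 2) =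
      Set.indicator (Set.Icc (-ν) ν) (fun _ => (1/(2*ν))^2) := by
  funext θ
  rw [show shortPSF boxcar ν (0 - θ) = Set.indicator (Set.Icc (-ν) ν) (fun _ => 1/(2*ν)) θ from
    congrFun (shortPSF_boxcar_eq ν hν) θ]
  by_cases h : θ ∈ Set.Icc (-ν) ν <;> simp [h]

/-- The variance in terms of the mass `p` of `[-ν,ν]`. -/
lemma Vnu_eq_s4 (ν σ : ℝ) (hν : 0 < ν) :
    Vnu boxcar ν σ 0 =
      (((gaussianReal 0 (σ^2).toNNReal) (Set.Icc (-ν) ν)).toReal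
        - (((gaussianReal 0 (σ^2).toNNReal) (Set.Icc (-ν) ν)).toReal)^2) / (4*ν^2) := by
  unfold Vnu
  rw [shortPSF_boxcar_sq_eq ν hν, shortPSF_boxcar_eq ν hν,
    integral_indicator_const _ measurableSet_Icc, integral_indicator_const _ measurableSet_Icc,
    smul_eq_mul, smul_eq_mul]
  set p := ((gaussianReal 0 (σ^2).toNNReal) (Set.Icc (-ν) ν)).toReal
  have h4 : (4*ν^2 : ℝ) ≠ 0 := by positivity
  field_simp
  simp only [measureReal_def, p]; ring

lemma gauss_eq_map (σ : ℝ) :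
    gaussianReal 0 (σ^2).toNNReal = (gaussianReal 0 1).map (σ * ·) := by
  rw [gaussianReal_map_const_mul]
  congr 1
  · ring
  · ext
    simp [Real.coe_toNNReal _ (sq_nonneg σ)]

lemma gauss_Icc (σ ν : ℝ) (hσ : 0 < σ) :
    (gaussianReal 0 (σ^2).toNNReal) (Set.Icc (-ν) ν)
      = (gaussianReal 0 1) (Set.Icc (-(ν/σ)) (ν/σ)) := by
  rw [gauss_eq_map σ, Measure.map_apply (measurable_const_mul σ) measurableSet_Icc,
    Set.preimage_const_mul_Icc₀ _ _ hσ, neg_div]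

lemma gauss_neg : (gaussianReal 0 1).map (fun x => (-1 : ℝ) * x) = gaussianReal 0 1 := by
  rw [gaussianReal_map_const_mul]
  congr 1
  · ring
  · ext; simp

lemma gauss_Iio_neg (c : ℝ) :
    (gaussianReal 0 1) (Set.Iio (-c)) = (gaussianReal 0 1) (Set.Ioi c) := by
  conv_lhs => rw [← gauss_neg]
  rw [Measure.map_apply (measurable_const_mul _) measurableSet_Iio]
  congr 1
  ext x
  simp only [Set.mem_preimage, Set.mem_Iio, Set.mem_Ioi]
  constructor <;> intro h <;> nlinarith

/-- Mass of the symmetric interval in terms of the standard normal CDF. -/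
lemma gauss_Icc_toReal (c : ℝ) (hc : 0 < c) :
    ((gaussianReal 0 1) (Set.Icc (-c) c)).toReal = 2 * stdNormalCDF c - 1 := by
  set μ₀ : Measure ℝ := gaussianReal 0 1
  have hsub : Set.Iio (-c) ⊆ Set.Iic c := fun x hx => by
    simp only [Set.mem_Iio] at hx
    simp only [Set.mem_Iic]
    linarith
  have hIcc : Set.Icc (-c) c = Set.Iic c \ Set.Iio (-c) := by
    ext x
    simp only [Set.mem_Icc, Set.mem_diff, Set.mem_Iic, Set.mem_Iio, not_lt]
    tauto
  have hdiff : μ₀ (Set.Icc (-c) c) = μ₀ (Set.Iic c) - μ₀ (Set.Iio (-c)) := by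
    rw [hIcc, measure_diff hsub measurableSet_Iio.nullMeasurableSet (measure_ne_top _ _)]
  have hioi : Set.Ioi c = (Set.Iic c)ᶜ := Set.compl_Iic.symm
  have hcompl : μ₀ (Set.Ioi c) = 1 - μ₀ (Set.Iic c) := by
    rw [hioi, prob_compl_eq_one_sub measurableSet_Iic]
  have hcdf : stdNormalCDF c = (μ₀ (Set.Iic c)).toReal := (cdf_eq_real _ c).trans (measureReal_def _ _)
  rw [hdiff, ENNReal.toReal_sub_of_le (measure_mono hsub) (measure_ne_top _ _),
    gauss_Iio_neg, hcompl,
    ENNReal.toReal_sub_of_le prob_le_one ENNReal.one_ne_top, ENNReal.toReal_one, hcdf]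
  ring

theorem boxcar_variance_increasing
    (ν : ℝ) (hν : 0 < ν) (σ₁ σ₂ : ℝ) (hσ₁ : 0 < σ₁) (h12 : σ₁ ≤ σ₂)
    (hσ₂ : (3 : ℝ) / 4 ≤ stdNormalCDF (ν / σ₂)) :
    Vnu boxcar ν σ₁ 0 ≤ Vnu boxcar ν σ₂ 0 := by
  have hσ₂pos : 0 < σ₂ := lt_of_lt_of_le hσ₁ h12
  rw [Vnu_eq_s4 ν σ₁ hν, Vnu_eq_s4 ν σ₂ hν]
  set a := ((gaussianReal 0 (σ₁^2).toNNReal) (Set.Icc (-ν) ν)).toReal with ha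
  set b := ((gaussianReal 0 (σ₂^2).toNNReal) (Set.Icc (-ν) ν)).toReal with hb
  have ha1 : a ≤ 1 := by
    rw [ha]
    have := prob_le_one (μ := gaussianReal 0 (σ₁^2).toNNReal) (s := Set.Icc (-ν) ν)
    calc ((gaussianReal 0 (σ₁^2).toNNReal) (Set.Icc (-ν) ν)).toReal
        ≤ (1 : ENNReal).toReal := ENNReal.toReal_mono ENNReal.one_ne_top this
      _ = 1 := ENNReal.toReal_one
  have hba : b ≤ a := by
    rw [ha, hb, gauss_Icc σ₁ ν hσ₁, gauss_Icc σ₂ ν hσ₂pos]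
    apply ENNReal.toReal_mono (measure_ne_top _ _)
    apply measure_mono
    have hdiv : ν / σ₂ ≤ ν / σ₁ := div_le_div_of_nonneg_left hν.le hσ₁ h12
    exact Set.Icc_subset_Icc (by linarith) hdiv
  have hbhalf : (1:ℝ)/2 ≤ b := by
    rw [hb, gauss_Icc σ₂ ν hσ₂pos, gauss_Icc_toReal _ (div_pos hν hσ₂pos)]
    linarith
  have hnum : a - a^2 ≤ b - b^2 := by
    nlinarith [mul_nonneg (sub_nonneg.2 hba) (by linarith : (0:ℝ) ≤ a + b - 1)]
  have hden : (0:ℝ) < 4*ν^2 := by positivity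
  exact (div_le_div_iff_of_pos_right hden).mpr hnum
end

section
/- Let K : ℝ → ℝ be a smoothing kernel with bound M, let ν > 0, and set h_ν(x) = (1/ν)·K(x/ν). Assume h_ν is Lipschitz continuous on ℝ. Then sup_{x ∈ ℝ} V_ν(x,σ) → 0 as σ → ∞. -/
open MeasureTheory ProbabilityTheory Real Filter
open scoped ENNReal NNReal

theorem supVar_tendsto_zero_atTop_of_lipschitz
    (K : ℝ → ℝ) (M ν : ℝ) (hν : 0 < ν)
    (hK0 : ∀ x, 0 ≤ K x) (hKM : ∀ x, K x ≤ M)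
    (hKeven : ∀ x, K (-x) = K x) (hKint : Integrable K)
    (L : NNReal) (hLip : LipschitzWith L (shortPSF K ν)) :
    Filter.Tendsto (fun σ : ℝ => ⨆ x : ℝ, Vnu K ν σ x) Filter.atTop (nhds 0) := by
  have hMnn : 0 ≤ M := (hK0 0).trans (hKM 0)
  set h : ℝ → ℝ := shortPSF K ν with hh
  have h0 : ∀ y, 0 ≤ h y := fun y => mul_nonneg (by positivity) (hK0 _)
  have hbd : ∀ y, h y ≤ M / ν := by
    intro y
    have h1 : (1/ν) * K (y/ν) ≤ (1/ν) * M :=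
      mul_le_mul_of_nonneg_left (hKM _) (by positivity)
    calc h y = (1/ν) * K (y/ν) := rfl
      _ ≤ (1/ν) * M := h1
      _ = M / ν := by ring
  have hcont : Continuous h := hLip.continuous
  set I : ℝ := ∫ x, K x with hI
  have hI0 : 0 ≤ I := integral_nonneg hK0
  have hinth : Integrable h := by
    have := (hKint.comp_div hν.ne').const_mul (1/ν)
    exact this
  have hintI : ∫ x, h x = I := by
    calc ∫ x, h x = ∫ x, (1/ν) * K (x/ν) := rfl
      _ = (1/ν) * ∫ x, K (x/ν) := integral_const_mul _ _
      _ = (1/ν) * (|ν| • ∫ x, K x) := by rw [Measure.integral_comp_div]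
      _ = I := by
          rw [abs_of_pos hν, smul_eq_mul]
          field_simp
          exact hI.symm
  set C : ℝ := (M / ν) * ((Real.sqrt (2 * π))⁻¹ * I) with hC
  have hCnn : 0 ≤ C := by positivity
  -- nonnegativity of Vnu
  have hVnn : ∀ (σ x : ℝ), 0 ≤ Vnu K ν σ x := by
    intro σ x
    set μ := gaussianReal 0 (σ ^ 2).toNNReal with hμ
    have hXc : Continuous (fun θ => h (x - θ)) := hcont.comp (continuous_const.sub continuous_id)
    have hmem : MemLp (fun θ => h (x - θ)) 2 μ :=
      memLp_of_bounded (ae_of_all _ fun θ => ⟨h0 _, hbd _⟩) hXc.aestronglyMeasurable 2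
    have hVeq : Vnu K ν σ x = variance (fun θ => h (x - θ)) μ := by
      rw [variance_eq_sub hmem]; rfl
    rw [hVeq]; exact variance_nonneg _ _
  -- upper bound
  have hkey : ∀ σ : ℝ, 0 < σ → ∀ x : ℝ, Vnu K ν σ x ≤ C * σ⁻¹ := by
    intro σ hσ x
    set v : ℝ≥0 := (σ ^ 2).toNNReal with hv
    have hvc : (v : ℝ) = σ ^ 2 := Real.coe_toNNReal _ (sq_nonneg σ)
    have hv0 : v ≠ 0 := by
      intro hcon
      rw [hcon] at hvc
      simp at hvc
      nlinarith
    set μ := gaussianReal 0 v with hμ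
    have hXc : Continuous (fun θ => h (x - θ)) := hcont.comp (continuous_const.sub continuous_id)
    have hint1 : Integrable (fun θ => h (x - θ)) μ :=
      memLp_one_iff_integrable.mp
        (memLp_of_bounded (ae_of_all _ fun θ => ⟨h0 _, hbd _⟩) hXc.aestronglyMeasurable 1)
    have hint2 : Integrable (fun θ => h (x - θ) ^ 2) μ :=
      memLp_one_iff_integrable.mp
        (memLp_of_bounded (μ := μ) (a := 0) (b := (M/ν)^2)
          (ae_of_all _ fun θ => ⟨by simp only [Pi.pow_apply]; positivity,
            by simp only [Pi.pow_apply]; have := h0 (x - θ); have := hbd (x - θ); nlinarith⟩)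
          (hXc.pow 2).aestronglyMeasurable 1)
    -- the density bound
    set c : ℝ := (Real.sqrt (2 * π * v))⁻¹ with hc
    have hpdf_le : ∀ θ, gaussianPDFReal 0 v θ ≤ c := by
      intro θ
      rw [gaussianPDFReal]
      have h1 : rexp (-(θ - 0) ^ 2 / (2 * v)) ≤ 1 := by
        rw [Real.exp_le_one_iff]
        have : (0:ℝ) ≤ (θ - 0) ^ 2 / (2 * v) := by positivity
        rw [neg_div]; linarith
      calc (√(2 * π * v))⁻¹ * rexp (-(θ - 0) ^ 2 / (2 * v)) ≤ (√(2 * π * v))⁻¹ * 1 :=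
            mul_le_mul_of_nonneg_left h1 (by positivity)
        _ = c := by rw [mul_one]
    have hmeas : Measurable fun θ => (gaussianPDFReal 0 v θ).toNNReal :=
      (measurable_gaussianPDFReal 0 v).real_toNNReal
    have hEeq : ∫ θ, h (x - θ) ∂μ = ∫ θ, gaussianPDFReal 0 v θ * h (x - θ) := by
      rw [hμ, gaussianReal_of_var_ne_zero 0 hv0]
      rw [show gaussianPDF 0 v = (fun θ => ((gaussianPDFReal 0 v θ).toNNReal : ℝ≥0∞)) from rfl]
      rw [integral_withDensity_eq_integral_smul hmeas]
      congr 1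
      ext θ
      rw [NNReal.smul_def, Real.coe_toNNReal _ (gaussianPDFReal_nonneg 0 v θ), smul_eq_mul]
    have hintcv : Integrable (fun θ => c * h (x - θ)) := (hinth.comp_sub_left x).const_mul c
    have hE_le : ∫ θ, h (x - θ) ∂μ ≤ c * I := by
      rw [hEeq]
      calc ∫ θ, gaussianPDFReal 0 v θ * h (x - θ)
          ≤ ∫ θ, c * h (x - θ) := by
            refine integral_mono_of_nonneg (ae_of_all _ fun θ => ?_) hintcv
              (ae_of_all _ fun θ => ?_)
            · exact mul_nonneg (gaussianPDFReal_nonneg 0 v θ) (h0 _)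
            · exact mul_le_mul_of_nonneg_right (hpdf_le θ) (h0 _)
        _ = c * ∫ θ, h (x - θ) := integral_const_mul _ _
        _ = c * I := by rw [integral_sub_left_eq_self h volume x, hintI]
    have hceq : c = (Real.sqrt (2 * π))⁻¹ * σ⁻¹ := by
      rw [hc, hvc, Real.sqrt_mul (by positivity) (σ ^ 2), Real.sqrt_sq hσ.le, mul_inv]
    have hEnn : 0 ≤ ∫ θ, h (x - θ) ∂μ := integral_nonneg fun θ => h0 _
    calc Vnu K ν σ x ≤ ∫ θ, h (x - θ) ^ 2 ∂μ := sub_le_self _ (sq_nonneg _)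
      _ ≤ ∫ θ, (M / ν) * h (x - θ) ∂μ := by
          refine integral_mono hint2 (hint1.const_mul _) fun θ => ?_
          have h1 := h0 (x - θ); have h2 := hbd (x - θ)
          nlinarith
      _ = (M / ν) * ∫ θ, h (x - θ) ∂μ := integral_const_mul _ _
      _ ≤ (M / ν) * (c * I) := mul_le_mul_of_nonneg_left hE_le (by positivity)
      _ = C * σ⁻¹ := by rw [hceq, hC]; ring
  -- squeeze
  have hg : Tendsto (fun σ : ℝ => C * σ⁻¹) atTop (nhds 0) := by
    simpa using (tendsto_inv_atTop_zero (𝕜 := ℝ)).const_mul C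
  refine squeeze_zero' ?_ ?_ hg
  · filter_upwards [eventually_gt_atTop (0:ℝ)] with σ hσ
    have hbdd : BddAbove (Set.range fun x => Vnu K ν σ x) :=
      ⟨C * σ⁻¹, by rintro _ ⟨x, rfl⟩; exact hkey σ hσ x⟩
    exact (hVnn σ 0).trans (le_ciSup hbdd 0)
  · filter_upwards [eventually_gt_atTop (0:ℝ)] with σ hσ
    exact ciSup_le (hkey σ hσ)
end

section
/- Let K : ℝ → ℝ be a smoothing kernel with bound M, let ν > 0, and set h_ν(x) = (1/ν)·K(x/ν). Assume h_ν is continuous on ℝ with compact support. Then sup_{x ∈ ℝ} V_ν(x,σ) → 0 as σ → ∞. -/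
open MeasureTheory ProbabilityTheory Real Filter
open scoped ENNReal NNReal

theorem supVar_tendsto_zero_atTop_of_compactSupport
    (K : ℝ → ℝ) (M ν : ℝ) (hν : 0 < ν)
    (hK0 : ∀ x, 0 ≤ K x) (hKM : ∀ x, K x ≤ M)
    (hKeven : ∀ x, K (-x) = K x) (hKint : Integrable K)
    (hcont : Continuous (shortPSF K ν)) (hsupp : HasCompactSupport (shortPSF K ν)) :
    Filter.Tendsto (fun σ : ℝ => ⨆ x : ℝ, Vnu K ν σ x) Filter.atTop (nhds 0) := by
  -- the squared PSF
  set g : ℝ → ℝ := fun y => (shortPSF K ν y) ^ 2 with hg_def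
  have hgc : Continuous g := hcont.pow 2
  have hgs : HasCompactSupport g := hsupp.comp_left (g := fun t : ℝ => t ^ 2) (by norm_num)
  have hgint : Integrable g := hgc.integrable_of_hasCompactSupport hgs
  set C : ℝ := ∫ y, g y with hC_def
  have hC : 0 ≤ C := integral_nonneg fun y => sq_nonneg _
  -- pointwise bounds on shortPSF
  have hP0 : ∀ y, 0 ≤ shortPSF K ν y := fun y => by
    have := hK0 (y / ν); unfold shortPSF; positivity
  have hPM : ∀ y, shortPSF K ν y ≤ M / ν := fun y => by
    unfold shortPSF
    rw [div_eq_mul_one_div M ν, mul_comm M (1 / ν)]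
    exact mul_le_mul_of_nonneg_left (hKM _) (by positivity)
  -- the bound
  set B : ℝ → ℝ := fun σ => (Real.sqrt (2 * π))⁻¹ * C * σ⁻¹ with hB_def
  have hBtend : Tendsto B atTop (nhds 0) := by
    rw [hB_def]
    have h := tendsto_inv_atTop_zero.const_mul ((Real.sqrt (2 * π))⁻¹ * C)
    simpa only [mul_zero, mul_assoc] using h
  have key : ∀ σ : ℝ, 1 ≤ σ → (0 ≤ ⨆ x : ℝ, Vnu K ν σ x) ∧ (⨆ x : ℝ, Vnu K ν σ x) ≤ B σ := by
    intro σ hσ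
    have hσ0 : (0:ℝ) < σ := lt_of_lt_of_le one_pos hσ
    set v : NNReal := (σ ^ 2).toNNReal with hv_def
    have hv : v ≠ 0 := by
      simp [hv_def, Real.toNNReal_eq_zero, not_le]
      positivity
    have hvcoe : ((v : ℝ)) = σ ^ 2 := Real.coe_toNNReal _ (sq_nonneg σ)
    set μ : Measure ℝ := gaussianReal 0 v with hμ_def
    -- upper bound for each x
    have hub : ∀ x : ℝ, Vnu K ν σ x ≤ B σ := by
      intro x
      have h1 : Vnu K ν σ x ≤ ∫ θ, (shortPSF K ν (x - θ)) ^ 2 ∂μ :=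
        sub_le_self _ (sq_nonneg _)
      refine h1.trans ?_
      -- rewrite via density
      have hwd : μ = volume.withDensity
          (fun θ => ((gaussianPDFReal 0 v θ).toNNReal : ℝ≥0∞)) := by
        rw [hμ_def, gaussianReal_of_var_ne_zero _ hv]; rfl
      have hmeas : Measurable fun θ => (gaussianPDFReal 0 v θ).toNNReal :=
        (measurable_gaussianPDFReal 0 v).real_toNNReal
      have h2 : ∫ θ, (shortPSF K ν (x - θ)) ^ 2 ∂μ
          = ∫ θ, (gaussianPDFReal 0 v θ).toNNReal • ((shortPSF K ν (x - θ)) ^ 2) := by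
        rw [hwd]
        exact integral_withDensity_eq_integral_smul hmeas _
      rw [h2]
      -- the density is bounded by (√(2π) σ)⁻¹
      have hpdf_le : ∀ θ, gaussianPDFReal 0 v θ ≤ (Real.sqrt (2 * π))⁻¹ * σ⁻¹ := by
        intro θ
        have h3 : gaussianPDFReal 0 v θ
            ≤ (Real.sqrt (2 * π * v))⁻¹ := by
          unfold gaussianPDFReal
          have he : rexp (-(θ - 0) ^ 2 / (2 * v)) ≤ 1 := by
            rw [Real.exp_le_one_iff]
            have : (0:ℝ) < (v:ℝ) := by rw [hvcoe]; positivity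
            apply div_nonpos_of_nonpos_of_nonneg <;> [skip; positivity]
            simp [neg_nonpos]; positivity
          calc (Real.sqrt (2 * π * v))⁻¹ * rexp (-(θ - 0) ^ 2 / (2 * v))
              ≤ (Real.sqrt (2 * π * v))⁻¹ * 1 :=
                mul_le_mul_of_nonneg_left he (by positivity)
            _ = (Real.sqrt (2 * π * v))⁻¹ := mul_one _
        refine h3.trans_eq ?_
        rw [hvcoe, show 2 * π * σ ^ 2 = (2 * π) * σ ^ 2 by ring,
          Real.sqrt_mul (by positivity), Real.sqrt_sq hσ0.le, mul_inv]
      -- integrate the bound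
      have h4 : ∫ θ, (gaussianPDFReal 0 v θ).toNNReal • ((shortPSF K ν (x - θ)) ^ 2)
          ≤ ∫ θ, ((Real.sqrt (2 * π))⁻¹ * σ⁻¹) * g (x - θ) := by
        refine integral_mono_of_nonneg (ae_of_all _ fun θ => ?_)
          (((hgint.comp_sub_left x).const_mul _)) (ae_of_all _ fun θ => ?_)
        · have := gaussianPDFReal_nonneg 0 v θ
          simp only [NNReal.smul_def, smul_eq_mul]
          positivity
        · simp only [NNReal.smul_def, smul_eq_mul,
            Real.coe_toNNReal _ (gaussianPDFReal_nonneg 0 v θ)]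
          exact mul_le_mul_of_nonneg_right (hpdf_le θ) (sq_nonneg _)
      refine h4.trans ?_
      rw [integral_const_mul, integral_sub_left_eq_self g volume x]
      rw [hB_def]
      ring_nf
      exact le_refl _
    -- nonnegativity of Vnu
    have hX : ∀ x : ℝ, MemLp (fun θ => shortPSF K ν (x - θ)) 2 μ := by
      intro x
      refine memLp_of_bounded (a := 0) (b := M / ν) (ae_of_all _ fun θ => ⟨hP0 _, hPM _⟩)
        ((hcont.comp (continuous_const.sub continuous_id)).aestronglyMeasurable) 2
    have hnn : ∀ x : ℝ, 0 ≤ Vnu K ν σ x := by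
      intro x
      have hvar := variance_nonneg (fun θ => shortPSF K ν (x - θ)) μ
      rw [variance_eq_sub (hX x)] at hvar
      have : Vnu K ν σ x = μ[(fun θ => shortPSF K ν (x - θ)) ^ 2]
          - (μ[fun θ => shortPSF K ν (x - θ)]) ^ 2 := by
        simp [Vnu, hμ_def, hv_def, Pi.pow_apply]
      rw [this]
      exact hvar
    have hbdd : BddAbove (Set.range fun x => Vnu K ν σ x) :=
      ⟨B σ, by rintro y ⟨x, rfl⟩; exact hub x⟩
    exact ⟨le_trans (hnn 0) (le_ciSup hbdd 0), ciSup_le hub⟩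
  refine tendsto_of_tendsto_of_tendsto_of_le_of_le' tendsto_const_nhds hBtend ?_ ?_
  · filter_upwards [eventually_ge_atTop (1:ℝ)] with σ hσ using (key σ hσ).1
  · filter_upwards [eventually_ge_atTop (1:ℝ)] with σ hσ using (key σ hσ).2
end

section
/- Let K : ℝ → ℝ be a smoothing kernel with bound M, let ν > 0, and set h_ν(x) = (1/ν)·K(x/ν). Assume h_ν is Lipschitz continuous on ℝ. If σ_0 ∈ (0,∞) and {σ_n} ⊂ (0,∞) is any sequence with σ_n → σ_0, then V_ν(·, σ_n) converges to V_ν(·, σ_0) uniformly on ℝ, i.e., sup_{x ∈ ℝ} |V_ν(x,σ_n) − V_ν(x,σ_0)| → 0 as n → ∞. -/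
open MeasureTheory ProbabilityTheory Real Filter

lemma abs_integrable_gaussian : Integrable (fun z : ℝ => |z|) (gaussianReal 0 1) := by
  rw [gaussianReal_of_var_ne_zero _ one_ne_zero,
    integrable_withDensity_iff (measurable_gaussianPDF _ _)
      (ae_of_all _ fun x => ENNReal.ofReal_lt_top)]
  have h : Integrable (fun z : ℝ => (√(2 * π))⁻¹ * |z * Real.exp (-(2⁻¹ : ℝ) * z ^ 2)|) volume :=
    ((integrable_mul_exp_neg_mul_sq (by norm_num : (0:ℝ) < 2⁻¹)).abs.const_mul _)
  refine h.congr ?_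
  filter_upwards with z
  have hpdf : ((gaussianPDF 0 1 z).toReal : ℝ) = (√(2*π))⁻¹ * Real.exp (-(2⁻¹:ℝ) * z^2) := by
    rw [gaussianPDF, ENNReal.toReal_ofReal (gaussianPDFReal_nonneg _ _ _), gaussianPDFReal]
    push_cast
    norm_num
    left; ring_nf
  rw [abs_mul, abs_of_nonneg (Real.exp_nonneg _), hpdf]
  ring

lemma gaussian_sq_eq_map (σ : ℝ) (hσ : 0 < σ) :
    gaussianReal 0 (σ ^ 2).toNNReal = (gaussianReal 0 1).map (σ * ·) := by
  rw [gaussianReal_map_const_mul]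
  congr 1
  · simp
  · ext
    simp [Real.coe_toNNReal _ (sq_nonneg σ)]

lemma integral_gaussian_sq (σ : ℝ) (hσ : 0 < σ) (g : ℝ → ℝ) (hg : Continuous g) :
    (∫ θ, g θ ∂(gaussianReal 0 (σ ^ 2).toNNReal))
      = ∫ z, g (σ * z) ∂(gaussianReal 0 1) := by
  rw [gaussian_sq_eq_map σ hσ,
    integral_map (measurable_const_mul σ).aemeasurable hg.aestronglyMeasurable]

theorem Vnu_uniform_convergence_along_sequence
    (K : ℝ → ℝ) (M ν : ℝ) (hν : 0 < ν)
    (hK0 : ∀ x, 0 ≤ K x) (hKM : ∀ x, K x ≤ M)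
    (hKeven : ∀ x, K (-x) = K x) (hKint : Integrable K)
    (L : NNReal) (hLip : LipschitzWith L (shortPSF K ν))
    (σ0 : ℝ) (hσ0 : 0 < σ0) (σs : ℕ → ℝ) (hσs : ∀ n, 0 < σs n)
    (hconv : Filter.Tendsto σs Filter.atTop (nhds σ0)) :
    Filter.Tendsto (fun n => ⨆ x : ℝ, |Vnu K ν (σs n) x - Vnu K ν σ0 x|)
      Filter.atTop (nhds 0) := by
  set f := shortPSF K ν with hf
  set γ := gaussianReal 0 1 with hγ
  have hfc : Continuous f := hLip.continuous
  set B : ℝ := M / ν with hB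
  have hf0 : ∀ y, 0 ≤ f y := fun y => by
    have := hK0 (y / ν)
    have h1 : (0:ℝ) ≤ 1 / ν := by positivity
    simpa [hf, shortPSF] using mul_nonneg h1 this
  have hfB : ∀ y, f y ≤ B := fun y => by
    have := hKM (y / ν)
    have h1 : (0:ℝ) < 1 / ν := by positivity
    calc f y = (1/ν) * K (y/ν) := rfl
      _ ≤ (1/ν) * M := by nlinarith
      _ = B := by rw [hB]; ring
  have hB0 : 0 ≤ B := le_trans (hf0 0) (hfB 0)
  set E1 : ℝ := ∫ z, |z| ∂γ with hE1
  have hE1nn : 0 ≤ E1 := integral_nonneg fun z => abs_nonneg z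
  set C : ℝ := 4 * B * L * E1 with hC
  have hC0 : 0 ≤ C := by positivity
  -- integrability facts
  have hcont : ∀ (σ x : ℝ), Continuous (fun z : ℝ => f (x - σ * z)) := fun σ x =>
    hfc.comp (continuous_const.sub (continuous_const.mul continuous_id))
  have hint1 : ∀ (σ x : ℝ), Integrable (fun z => f (x - σ * z)) γ := fun σ x => by
    refine Integrable.mono' (integrable_const B)
      ((hcont σ x).aestronglyMeasurable) ?_
    filter_upwards with z
    rw [Real.norm_eq_abs, abs_of_nonneg (hf0 _)]
    exact hfB _
  have hint2 : ∀ (σ x : ℝ), Integrable (fun z => (f (x - σ * z)) ^ 2) γ := fun σ x => by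
    refine Integrable.mono' (integrable_const (B ^ 2))
      (((hcont σ x).pow 2).aestronglyMeasurable) ?_
    filter_upwards with z
    rw [Real.norm_eq_abs, abs_of_nonneg (sq_nonneg _)]
    exact pow_le_pow_left₀ (hf0 _) (hfB _) 2
  have hintabs : Integrable (fun z : ℝ => |z|) γ := abs_integrable_gaussian
  -- key uniform estimate
  have key : ∀ (σ τ : ℝ), 0 < σ → 0 < τ → ∀ x,
      |Vnu K ν σ x - Vnu K ν τ x| ≤ C * |σ - τ| := by
    intro σ τ hσ hτ x
    have hV : ∀ (s : ℝ) (hs : 0 < s), Vnu K ν s x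
        = (∫ z, (f (x - s * z)) ^ 2 ∂γ) - (∫ z, f (x - s * z) ∂γ) ^ 2 := by
      intro s hs
      have hc1 : Continuous (fun θ : ℝ => f (x - θ)) :=
        hfc.comp (continuous_const.sub continuous_id)
      rw [Vnu, integral_gaussian_sq s hs (fun θ => (f (x - θ)) ^ 2) (hc1.pow 2),
        integral_gaussian_sq s hs (fun θ => f (x - θ)) hc1]
    rw [hV σ hσ, hV τ hτ]
    -- pointwise Lipschitz estimate
    have hlip : ∀ z : ℝ, |f (x - σ * z) - f (x - τ * z)| ≤ (L : ℝ) * |σ - τ| * |z| := by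
      intro z
      have := hLip.dist_le_mul (x - σ * z) (x - τ * z)
      rw [Real.dist_eq, Real.dist_eq] at this
      calc |f (x - σ * z) - f (x - τ * z)| ≤ (L : ℝ) * |x - σ * z - (x - τ * z)| := this
        _ = (L : ℝ) * |σ - τ| * |z| := by
            rw [show x - σ * z - (x - τ * z) = (σ - τ) * (-z) by ring, abs_mul, abs_neg]
            ring
    set a := fun z => f (x - σ * z) with ha
    set b := fun z => f (x - τ * z) with hb
    have hI1 : |(∫ z, a z ∂γ) - ∫ z, b z ∂γ| ≤ (L : ℝ) * E1 * |σ - τ| := by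
      rw [← integral_sub (hint1 σ x) (hint1 τ x)]
      calc |∫ z, (a z - b z) ∂γ| ≤ ∫ z, |a z - b z| ∂γ := by
            simpa using norm_integral_le_integral_norm (μ := γ) (fun z => a z - b z)
        _ ≤ ∫ z, (L : ℝ) * |σ - τ| * |z| ∂γ := by
            refine integral_mono ((hint1 σ x).sub (hint1 τ x)).abs
              ((hintabs.const_mul _)) hlip
        _ = (L : ℝ) * E1 * |σ - τ| := by rw [integral_const_mul]; ring
    have hIb : ∀ (g : ℝ → ℝ) (hg : Integrable g γ) (h0 : ∀ z, 0 ≤ g z)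
        (hgB : ∀ z, g z ≤ B), |∫ z, g z ∂γ| ≤ B := by
      intro g hg h0 hgB
      calc |∫ z, g z ∂γ| ≤ ∫ z, |g z| ∂γ := by
            simpa using norm_integral_le_integral_norm (μ := γ) g
        _ ≤ ∫ z, B ∂γ := by
            refine integral_mono hg.abs (integrable_const B) fun z => ?_
            rw [abs_of_nonneg (h0 z)]; exact hgB z
        _ = B := by rw [integral_const, hγ]; simp
    have hI2 : |(∫ z, (a z) ^ 2 ∂γ) - ∫ z, (b z) ^ 2 ∂γ| ≤ 2 * B * (L : ℝ) * E1 * |σ - τ| := by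
      rw [← integral_sub (hint2 σ x) (hint2 τ x)]
      calc |∫ z, ((a z) ^ 2 - (b z) ^ 2) ∂γ| ≤ ∫ z, |(a z) ^ 2 - (b z) ^ 2| ∂γ := by
            simpa using norm_integral_le_integral_norm (μ := γ) (fun z => (a z) ^ 2 - (b z) ^ 2)
        _ ≤ ∫ z, 2 * B * ((L : ℝ) * |σ - τ|) * |z| ∂γ := by
            refine integral_mono ((hint2 σ x).sub (hint2 τ x)).abs (hintabs.const_mul _)
              fun z => ?_
            have h1 : |(a z) ^ 2 - (b z) ^ 2| = |a z + b z| * |a z - b z| := by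
              rw [← abs_mul]; congr 1; ring
            have h2 : |a z + b z| ≤ 2 * B := by
              rw [abs_of_nonneg (add_nonneg (hf0 _) (hf0 _))]
              have h3 := hfB (x - σ * z); have h4 := hfB (x - τ * z)
              show f (x - σ * z) + f (x - τ * z) ≤ 2 * B
              linarith
            rw [h1]
            calc |a z + b z| * |a z - b z| ≤ (2 * B) * ((L : ℝ) * |σ - τ| * |z|) := by
                  exact mul_le_mul h2 (hlip z) (abs_nonneg _) (by positivity)
              _ = 2 * B * ((L : ℝ) * |σ - τ|) * |z| := by ring
        _ = 2 * B * (L : ℝ) * E1 * |σ - τ| := by rw [integral_const_mul]; ring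
    have hI1sq : |(∫ z, a z ∂γ) ^ 2 - (∫ z, b z ∂γ) ^ 2| ≤ 2 * B * (L : ℝ) * E1 * |σ - τ| := by
      have h1 : |(∫ z, a z ∂γ) ^ 2 - (∫ z, b z ∂γ) ^ 2|
          = |(∫ z, a z ∂γ) + ∫ z, b z ∂γ| * |(∫ z, a z ∂γ) - ∫ z, b z ∂γ| := by
        rw [← abs_mul]; congr 1; ring
      have h2 : |(∫ z, a z ∂γ) + ∫ z, b z ∂γ| ≤ 2 * B := by
        calc |(∫ z, a z ∂γ) + ∫ z, b z ∂γ| ≤ |∫ z, a z ∂γ| + |∫ z, b z ∂γ| := abs_add_le _ _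
          _ ≤ B + B := add_le_add
              (hIb a (hint1 σ x) (fun z => hf0 _) (fun z => hfB _))
              (hIb b (hint1 τ x) (fun z => hf0 _) (fun z => hfB _))
          _ = 2 * B := by ring
      rw [h1]
      calc |(∫ z, a z ∂γ) + ∫ z, b z ∂γ| * |(∫ z, a z ∂γ) - ∫ z, b z ∂γ|
          ≤ (2 * B) * ((L : ℝ) * E1 * |σ - τ|) :=
            mul_le_mul h2 hI1 (abs_nonneg _) (by positivity)
        _ = 2 * B * (L : ℝ) * E1 * |σ - τ| := by ring
    calc |((∫ z, (a z) ^ 2 ∂γ) - (∫ z, a z ∂γ) ^ 2)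
          - ((∫ z, (b z) ^ 2 ∂γ) - (∫ z, b z ∂γ) ^ 2)|
        ≤ |(∫ z, (a z) ^ 2 ∂γ) - ∫ z, (b z) ^ 2 ∂γ|
          + |(∫ z, a z ∂γ) ^ 2 - (∫ z, b z ∂γ) ^ 2| := by
          rw [show ((∫ z, (a z) ^ 2 ∂γ) - (∫ z, a z ∂γ) ^ 2)
              - ((∫ z, (b z) ^ 2 ∂γ) - (∫ z, b z ∂γ) ^ 2)
            = ((∫ z, (a z) ^ 2 ∂γ) - ∫ z, (b z) ^ 2 ∂γ)
              - ((∫ z, a z ∂γ) ^ 2 - (∫ z, b z ∂γ) ^ 2) by ring]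
          exact abs_sub _ _
      _ ≤ 2 * B * (L : ℝ) * E1 * |σ - τ| + 2 * B * (L : ℝ) * E1 * |σ - τ| :=
          add_le_add hI2 hI1sq
      _ = C * |σ - τ| := by rw [hC]; ring
  -- squeeze
  have hbdd : ∀ n, BddAbove (Set.range fun x => |Vnu K ν (σs n) x - Vnu K ν σ0 x|) := by
    intro n
    exact ⟨C * |σs n - σ0|, by rintro y ⟨x, rfl⟩; exact key _ _ (hσs n) hσ0 x⟩
  refine squeeze_zero (g := fun n => C * |σs n - σ0|) (fun n => ?_) (fun n => ?_) ?_
  · exact le_trans (abs_nonneg _) (le_ciSup (hbdd n) 0)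
  · exact ciSup_le fun x => key _ _ (hσs n) hσ0 x
  · have h1 : Tendsto (fun n => |σs n - σ0|) atTop (nhds 0) := by
      have := (hconv.sub_const σ0).abs
      simpa using this
    have := h1.const_mul C
    simpa using this
end
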